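/- Let G be a cancellative 3-uniform hypergraph on n vertices with n ≡ 0 (mod 3). Then |E(G)| ≤ t_3(n) = n^3/27, with equality if and only if G is isomorphic to T_3(n). -/

import Mathlib

open Finset

/-- A 3-uniform hypergraph on vertex set `Fin n`, given by its edge set:
every edge is a 3-element subset. -/
def IsThreeGraph {n : ℕ} (E : Finset (Finset (Fin n))) : Prop :=
  ∀ e ∈ E, e.card = 3

/-- `G` is cancellative: there are no three distinct edges `A, B, C` with `B △ C ⊆ A`. -/
def Cancellative {n : ℕ} (E : Finset (Finset (Fin n))) : Prop :=
  ∀ A ∈ E, ∀ B ∈ E, ∀ C ∈ E, A ≠ B → A ≠ C → B ≠ C → ¬ (symmDiff B C ⊆ A)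

/-- The `p`-norm of a vector `x ∈ ℝ^n`. -/
noncomputable def pNorm {n : ℕ} (p : ℝ) (x : Fin n → ℝ) : ℝ :=
  (∑ i, |x i| ^ p) ^ (1 / p)

/-- The polynomial form of a 3-graph. -/
noncomputable def polyForm {n : ℕ} (E : Finset (Finset (Fin n))) (x : Fin n → ℝ) : ℝ :=
  3 * ∑ e ∈ E, ∏ i ∈ e, x i

/-- The `p`-spectral radius of a 3-graph: the maximum of the polynomial form over the
unit sphere of the `p`-norm. -/
noncomputable def specRad {n : ℕ} (p : ℝ) (E : Finset (Finset (Fin n))) : ℝ :=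
  sSup {r : ℝ | ∃ x : Fin n → ℝ, pNorm p x = 1 ∧ polyForm E x = r}

/-- The part (among the three parts of sizes ⌊n/3⌋, ⌊(n+1)/3⌋, ⌊(n+2)/3⌋) containing vertex `i`. -/
def part3 (n : ℕ) (i : Fin n) : Fin 3 :=
  if (i : ℕ) < n / 3 then 0 else if (i : ℕ) < n / 3 + (n + 1) / 3 then 1 else 2

/-- The complete 3-partite 3-graph `T_3(n)` with part sizes ⌊n/3⌋, ⌊(n+1)/3⌋, ⌊(n+2)/3⌋:
edges are the triples having exactly one vertex in each part. -/
def T3 (n : ℕ) : Finset (Finset (Fin n)) :=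
  Finset.univ.filter fun e => ∀ k : Fin 3, (e.filter fun i => part3 n i = k).card = 1

/-- `t_3(n)`, the number of edges of `T_3(n)`. -/
def t3 (n : ℕ) : ℕ := (n / 3) * ((n + 1) / 3) * ((n + 2) / 3)

/-- Two 3-graphs on `Fin n` are isomorphic. -/
def IsoTo {n : ℕ} (E₁ E₂ : Finset (Finset (Fin n))) : Prop :=
  ∃ σ : Fin n ≃ Fin n, ∀ e : Finset (Fin n), e ∈ E₁ ↔ e.map σ.toEmbedding ∈ E₂

/-- Two vertices are adjacent if some edge contains both. -/
def Adjacent {n : ℕ} (E : Finset (Finset (Fin n))) (u v : Fin n) : Prop :=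
  u ≠ v ∧ ∃ e ∈ E, u ∈ e ∧ v ∈ e

/-- The link of a vertex `v`: all 2-element sets `S` with `S ∪ {v} ∈ E`. -/
def link {n : ℕ} (E : Finset (Finset (Fin n))) (v : Fin n) : Finset (Finset (Fin n)) :=
  (E.filter fun e => v ∈ e).image fun e => e.erase v

/-- The degree of a vertex: the size of its link. -/
def degree {n : ℕ} (E : Finset (Finset (Fin n))) (v : Fin n) : ℕ := (link E v).card

/-- The transfer `T_v^u(G)`: delete all edges containing `v` and replace `v` for `u`
in all edges containing `u` but not `v`. -/
def transfer {n : ℕ} (E : Finset (Finset (Fin n))) (u v : Fin n) : Finset (Finset (Fin n)) :=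
  (E.filter fun e => v ∉ e) ∪
    ((E.filter fun e => u ∈ e ∧ v ∉ e).image fun e => insert v (e.erase u))

/-- A 3-graph is complete 3-partite: there is a partition of the vertices into three classes
such that the edges are exactly the triples with one vertex in each class. -/
def IsComplete3Partite {n : ℕ} (E : Finset (Finset (Fin n))) : Prop :=
  ∃ P : Fin n → Fin 3,
    ∀ e : Finset (Fin n), e ∈ E ↔ ∀ k : Fin 3, (e.filter fun i => P i = k).card = 1

/-- `G` has maximum `p`-spectral radius among all cancellative 3-graphs on `n` vertices. -/
def MaxSpectral {n : ℕ} (p : ℝ) (E : Finset (Finset (Fin n))) : Prop :=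
  IsThreeGraph E ∧ Cancellative E ∧
    ∀ E' : Finset (Finset (Fin n)), IsThreeGraph E' → Cancellative E' →
      specRad p E' ≤ specRad p E


namespace BB

variable {n : ℕ}

noncomputable def pv (E : Finset (Finset (Fin n))) (x : Fin n → ℝ) : ℝ :=
  ∑ e ∈ E, ∏ i ∈ e, x i

noncomputable def mv (E : Finset (Finset (Fin n))) (x : Fin n → ℝ) (v : Fin n) : ℝ :=
  ∑ e ∈ E.filter (fun e => v ∈ e), ∏ i ∈ e.erase v, x i

noncomputable def Wc (E : Finset (Finset (Fin n))) (x : Fin n → ℝ) (u v : Fin n) : ℝ :=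
  ∑ e ∈ E.filter (fun e => u ∈ e ∧ v ∈ e), ∏ i ∈ (e.erase u).erase v, x i

noncomputable def shft (x : Fin n → ℝ) (u v : Fin n) (t : ℝ) : Fin n → ℝ :=
  Function.update (Function.update x u (x u + t)) v (x v - t)

lemma shft_u {x : Fin n → ℝ} {u v : Fin n} (huv : u ≠ v) (t : ℝ) : shft x u v t u = x u + t := by
  simp [shft, Function.update_of_ne huv]

lemma shft_v {x : Fin n → ℝ} {u v : Fin n} (t : ℝ) : shft x u v t v = x v - t := by
  simp [shft]

lemma shft_other {x : Fin n → ℝ} {u v i : Fin n} (hiu : i ≠ u) (hiv : i ≠ v) (t : ℝ) :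
    shft x u v t i = x i := by
  simp [shft, Function.update_of_ne hiu, Function.update_of_ne hiv]

lemma shft_sum {x : Fin n → ℝ} {u v : Fin n} (huv : u ≠ v) (t : ℝ) :
    ∑ i, shft x u v t i = ∑ i, x i := by
  have hv : v ∈ (univ : Finset (Fin n)) := mem_univ v
  have hu : u ∈ (univ : Finset (Fin n)).erase v := by simp [huv]
  rw [← Finset.add_sum_erase _ _ hv, ← Finset.add_sum_erase _ _ hu,
    ← Finset.add_sum_erase _ (fun i => x i) hv, ← Finset.add_sum_erase _ (fun i => x i) hu]
  have h1 : ∑ i ∈ ((univ : Finset (Fin n)).erase v).erase u, shft x u v t i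
      = ∑ i ∈ ((univ : Finset (Fin n)).erase v).erase u, x i := by
    refine Finset.sum_congr rfl fun i hi => ?_
    simp only [mem_erase] at hi
    exact shft_other hi.1 hi.2.1 t
  rw [h1, shft_v, shft_u huv]
  ring

lemma pv_decomp (E : Finset (Finset (Fin n))) (y : Fin n → ℝ) (u v : Fin n) :
    pv E y = (∑ e ∈ E.filter (fun e => u ∈ e ∧ v ∈ e), ∏ i ∈ e, y i)
      + (∑ e ∈ E.filter (fun e => u ∈ e ∧ v ∉ e), ∏ i ∈ e, y i)
      + ((∑ e ∈ E.filter (fun e => u ∉ e ∧ v ∈ e), ∏ i ∈ e, y i)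
      + (∑ e ∈ E.filter (fun e => u ∉ e ∧ v ∉ e), ∏ i ∈ e, y i)) := by
  unfold pv
  rw [← Finset.sum_filter_add_sum_filter_not E (fun e => u ∈ e) (fun e => ∏ i ∈ e, y i)]
  rw [← Finset.sum_filter_add_sum_filter_not (E.filter (fun e => u ∈ e)) (fun e => v ∈ e)
    (fun e => ∏ i ∈ e, y i)]
  rw [← Finset.sum_filter_add_sum_filter_not (E.filter (fun e => ¬ u ∈ e)) (fun e => v ∈ e)
    (fun e => ∏ i ∈ e, y i)]
  rw [Finset.filter_filter, Finset.filter_filter, Finset.filter_filter, Finset.filter_filter]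

lemma prod_split_uv {e : Finset (Fin n)} {u v : Fin n} (hu : u ∈ e) (hv : v ∈ e) (huv : u ≠ v)
    (y : Fin n → ℝ) :
    ∏ i ∈ e, y i = y u * (y v * ∏ i ∈ (e.erase u).erase v, y i) := by
  rw [← Finset.mul_prod_erase e y hu, ← Finset.mul_prod_erase (e.erase u) y
    (Finset.mem_erase.mpr ⟨huv.symm, hv⟩)]

lemma prod_split_u {e : Finset (Fin n)} {u : Fin n} (hu : u ∈ e) (y : Fin n → ℝ) :
    ∏ i ∈ e, y i = y u * ∏ i ∈ e.erase u, y i :=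
  (Finset.mul_prod_erase e y hu).symm

lemma mv_decomp (E : Finset (Finset (Fin n))) (x : Fin n → ℝ) {u v : Fin n} (huv : u ≠ v) :
    mv E x u = (∑ e ∈ E.filter (fun e => u ∈ e ∧ v ∈ e), ∏ i ∈ (e.erase u).erase v, x i) * x v
      + (∑ e ∈ E.filter (fun e => u ∈ e ∧ v ∉ e), ∏ i ∈ e.erase u, x i) := by
  unfold mv
  rw [← Finset.sum_filter_add_sum_filter_not (E.filter (fun e => u ∈ e)) (fun e => v ∈ e)
    (fun e => ∏ i ∈ e.erase u, x i), Finset.filter_filter, Finset.filter_filter]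
  congr 1
  rw [Finset.sum_mul]
  refine Finset.sum_congr rfl fun e he => ?_
  simp only [Finset.mem_filter] at he
  rw [mul_comm, ← Finset.mul_prod_erase (e.erase u) x
    (Finset.mem_erase.mpr ⟨huv.symm, he.2.2⟩)]

lemma ferase_comm (s : Finset (Fin n)) (a b : Fin n) :
    (s.erase a).erase b = (s.erase b).erase a := by
  ext i; simp only [Finset.mem_erase]; tauto

lemma Wc_comm (E : Finset (Finset (Fin n))) (x : Fin n → ℝ) (u v : Fin n) :
    Wc E x v u = Wc E x u v := by
  unfold Wc
  rw [Finset.filter_congr (fun e _ => by rw [and_comm])]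
  refine Finset.sum_congr rfl fun e he => ?_
  rw [ferase_comm]

lemma master (E : Finset (Finset (Fin n))) {u v : Fin n} (huv : u ≠ v) (x : Fin n → ℝ) (t : ℝ) :
    pv E (shft x u v t) = pv E x + t * (mv E x u - mv E x v) - t^2 * Wc E x u v := by
  have hdx := pv_decomp E x u v
  have hds := pv_decomp E (shft x u v t) u v
  -- rewrite the four pieces of the shifted sum
  have h1 : ∑ e ∈ E.filter (fun e => u ∈ e ∧ v ∈ e), ∏ i ∈ e, shft x u v t i
      = ((x u + t) * (x v - t)) * Wc E x u v := by
    rw [Wc, Finset.mul_sum]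
    refine Finset.sum_congr rfl fun e he => ?_
    simp only [Finset.mem_filter] at he
    rw [prod_split_uv he.2.1 he.2.2 huv]
    have : ∏ i ∈ (e.erase u).erase v, shft x u v t i = ∏ i ∈ (e.erase u).erase v, x i := by
      refine Finset.prod_congr rfl fun i hi => ?_
      simp only [Finset.mem_erase] at hi
      exact shft_other hi.2.1 hi.1 t
    rw [this, shft_u huv, shft_v]
    ring
  have h1x : ∑ e ∈ E.filter (fun e => u ∈ e ∧ v ∈ e), ∏ i ∈ e, x i
      = (x u * x v) * Wc E x u v := by
    rw [Wc, Finset.mul_sum]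
    refine Finset.sum_congr rfl fun e he => ?_
    simp only [Finset.mem_filter] at he
    rw [prod_split_uv he.2.1 he.2.2 huv]
    ring
  have h2 : ∑ e ∈ E.filter (fun e => u ∈ e ∧ v ∉ e), ∏ i ∈ e, shft x u v t i
      = (x u + t) * ∑ e ∈ E.filter (fun e => u ∈ e ∧ v ∉ e), ∏ i ∈ e.erase u, x i := by
    rw [Finset.mul_sum]
    refine Finset.sum_congr rfl fun e he => ?_
    simp only [Finset.mem_filter] at he
    rw [prod_split_u he.2.1]
    have : ∏ i ∈ e.erase u, shft x u v t i = ∏ i ∈ e.erase u, x i := by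
      refine Finset.prod_congr rfl fun i hi => ?_
      simp only [Finset.mem_erase] at hi
      exact shft_other hi.1 (by rintro rfl; exact he.2.2 hi.2) t
    rw [this, shft_u huv]
  have h2x : ∑ e ∈ E.filter (fun e => u ∈ e ∧ v ∉ e), ∏ i ∈ e, x i
      = x u * ∑ e ∈ E.filter (fun e => u ∈ e ∧ v ∉ e), ∏ i ∈ e.erase u, x i := by
    rw [Finset.mul_sum]
    refine Finset.sum_congr rfl fun e he => ?_
    simp only [Finset.mem_filter] at he
    rw [prod_split_u he.2.1]
  have h3 : ∑ e ∈ E.filter (fun e => u ∉ e ∧ v ∈ e), ∏ i ∈ e, shft x u v t i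
      = (x v - t) * ∑ e ∈ E.filter (fun e => u ∉ e ∧ v ∈ e), ∏ i ∈ e.erase v, x i := by
    rw [Finset.mul_sum]
    refine Finset.sum_congr rfl fun e he => ?_
    simp only [Finset.mem_filter] at he
    rw [prod_split_u he.2.2]
    have : ∏ i ∈ e.erase v, shft x u v t i = ∏ i ∈ e.erase v, x i := by
      refine Finset.prod_congr rfl fun i hi => ?_
      simp only [Finset.mem_erase] at hi
      exact shft_other (by rintro rfl; exact he.2.1 hi.2) hi.1 t
    rw [this, shft_v]
  have h3x : ∑ e ∈ E.filter (fun e => u ∉ e ∧ v ∈ e), ∏ i ∈ e, x i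
      = x v * ∑ e ∈ E.filter (fun e => u ∉ e ∧ v ∈ e), ∏ i ∈ e.erase v, x i := by
    rw [Finset.mul_sum]
    refine Finset.sum_congr rfl fun e he => ?_
    simp only [Finset.mem_filter] at he
    rw [prod_split_u he.2.2]
  have h4 : ∑ e ∈ E.filter (fun e => u ∉ e ∧ v ∉ e), ∏ i ∈ e, shft x u v t i
      = ∑ e ∈ E.filter (fun e => u ∉ e ∧ v ∉ e), ∏ i ∈ e, x i := by
    refine Finset.sum_congr rfl fun e he => ?_
    simp only [Finset.mem_filter] at he
    refine Finset.prod_congr rfl fun i hi => ?_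
    exact shft_other (by rintro rfl; exact he.2.1 hi) (by rintro rfl; exact he.2.2 hi) t
  -- mv decompositions
  have hmu := mv_decomp E x huv
  have hmv' : mv E x v = (∑ e ∈ E.filter (fun e => u ∈ e ∧ v ∈ e), ∏ i ∈ (e.erase u).erase v, x i) * x u
      + (∑ e ∈ E.filter (fun e => u ∉ e ∧ v ∈ e), ∏ i ∈ e.erase v, x i) := by
    have h := mv_decomp E x huv.symm
    rw [h]
    congr 1
    · rw [show (E.filter (fun e => v ∈ e ∧ u ∈ e)) = (E.filter (fun e => u ∈ e ∧ v ∈ e)) from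
        Finset.filter_congr (fun e _ => by rw [and_comm])]
      congr 1
      exact Finset.sum_congr rfl fun e _ => by rw [ferase_comm]
    · rw [show (E.filter (fun e => v ∈ e ∧ u ∉ e)) = (E.filter (fun e => u ∉ e ∧ v ∈ e)) from
        Finset.filter_congr (fun e _ => by rw [and_comm])]
  rw [hds, h1, h2, h3, h4, hdx, h1x, h2x, h3x, hmu, hmv']
  show _ = _ + _ * (_ - _) - _ * Wc E x u v
  unfold Wc
  ring

lemma Wc_nonneg (E : Finset (Finset (Fin n))) {x : Fin n → ℝ} (hx : ∀ i, 0 ≤ x i)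
    (u v : Fin n) : 0 ≤ Wc E x u v :=
  Finset.sum_nonneg fun e _ => Finset.prod_nonneg fun i _ => hx i

lemma shft_mem {x : Fin n → ℝ} {u v : Fin n} (huv : u ≠ v)
    (hx : x ∈ stdSimplex ℝ (Fin n)) {t : ℝ} (h1 : -x u ≤ t) (h2 : t ≤ x v) :
    shft x u v t ∈ stdSimplex ℝ (Fin n) := by
  constructor
  · intro i
    by_cases hiv : i = v
    · subst hiv; rw [shft_v]; linarith
    · by_cases hiu : i = u
      · subst hiu; rw [shft_u huv]; linarith
      · rw [shft_other hiu hiv]; exact hx.1 i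
  · rw [shft_sum huv]; exact hx.2

lemma kkt (E : Finset (Finset (Fin n))) {x : Fin n → ℝ} (hx : x ∈ stdSimplex ℝ (Fin n))
    (hmax : ∀ y ∈ stdSimplex ℝ (Fin n), pv E y ≤ pv E x)
    {u v : Fin n} (huv : u ≠ v) (hu : 0 < x u) (hv : 0 < x v) :
    mv E x u = mv E x v := by
  by_contra hne
  set γ := mv E x u - mv E x v with hγdef
  have habs : 0 < |γ| := abs_pos.mpr (sub_ne_zero.mpr hne)
  set W := Wc E x u v with hWdef
  have hW : 0 ≤ W := Wc_nonneg E hx.1 u v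
  set ε := min (min (x u) (x v)) (|γ|/(W+1)) / 2 with hεdef
  have hεpos : 0 < ε := by
    apply div_pos _ (by norm_num)
    exact lt_min (lt_min hu hv) (div_pos habs (by linarith))
  have hεu : ε ≤ x u := by
    have h1 := min_le_left (min (x u) (x v)) (|γ|/(W+1))
    have h2 := min_le_left (x u) (x v)
    rw [hεdef]; linarith
  have hεv : ε ≤ x v := by
    have h1 := min_le_left (min (x u) (x v)) (|γ|/(W+1))
    have h2 := min_le_right (x u) (x v)
    rw [hεdef]; linarith
  have hεb : 2 * ε * (W+1) ≤ |γ| := by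
    have h1 := min_le_right (min (x u) (x v)) (|γ|/(W+1))
    have h2 : ε ≤ (|γ|/(W+1)) / 2 := by rw [hεdef]; linarith
    have h3 : (0:ℝ) < W + 1 := by linarith
    rw [div_div] at h2
    have := (le_div_iff₀ (by linarith : (0:ℝ) < (W+1)*2)).mp h2
    linarith
  set t := if 0 ≤ γ then ε else -ε with htdef
  have ht1 : -x u ≤ t := by
    rw [htdef]; split <;> linarith
  have ht2 : t ≤ x v := by
    rw [htdef]; split <;> linarith
  have hle := hmax _ (shft_mem huv hx ht1 ht2)
  rw [master E huv x t] at hle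
  have hkey : t * γ ≤ t^2 * W := by rw [hγdef] at *; linarith
  have htγ : t * γ = ε * |γ| := by
    rw [htdef]
    rcases le_or_gt 0 γ with h | h
    · rw [if_pos h, abs_of_nonneg h]
    · rw [if_neg (not_le.mpr h), abs_of_neg h]; ring
  have ht2ε : t^2 = ε^2 := by
    rw [htdef]; split <;> ring
  rw [htγ, ht2ε] at hkey
  nlinarith [mul_le_mul_of_nonneg_left hεb (le_of_lt hεpos)]

/-- If `u,v` have no joint weight interaction (`Wc = 0`), weight can be pushed to an endpoint
without decreasing the polynomial. -/
lemma shift_noW (E : Finset (Finset (Fin n))) {x : Fin n → ℝ} (hx : x ∈ stdSimplex ℝ (Fin n))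
    {u v : Fin n} (huv : u ≠ v) (hW : Wc E x u v = 0) :
    ∃ y ∈ stdSimplex ℝ (Fin n), pv E x ≤ pv E y ∧ (y u = 0 ∨ y v = 0) ∧
      (∀ i, i ≠ u → i ≠ v → y i = x i) := by
  rcases le_or_gt 0 (mv E x u - mv E x v) with hγ | hγ
  · refine ⟨shft x u v (x v), shft_mem huv hx (by linarith [hx.1 u, hx.1 v]) le_rfl, ?_, ?_, ?_⟩
    · rw [master E huv x (x v), hW]
      nlinarith [hx.1 v]
    · right; rw [shft_v]; ring
    · intro i h1 h2; exact shft_other h1 h2 _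
  · refine ⟨shft x u v (-x u), shft_mem huv hx le_rfl (by linarith [hx.1 u, hx.1 v]), ?_, ?_, ?_⟩
    · rw [master E huv x (-x u), hW]
      nlinarith [hx.1 u]
    · left; rw [shft_u huv]; ring
    · intro i h1 h2; exact shft_other h1 h2 _

lemma exists_third {e : Finset (Fin n)} (he : e.card = 3) {u v : Fin n}
    (hu : u ∈ e) (hv : v ∈ e) (huv : u ≠ v) :
    ∃ w, w ≠ u ∧ w ≠ v ∧ e = {u, v, w} := by
  have hve : v ∈ e.erase u := Finset.mem_erase.mpr ⟨huv.symm, hv⟩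
  have h1 : ((e.erase u).erase v).card = 1 := by
    rw [Finset.card_erase_of_mem hve, Finset.card_erase_of_mem hu, he]
  obtain ⟨w, hw⟩ := Finset.card_eq_one.mp h1
  have hwm : w ∈ (e.erase u).erase v := by rw [hw]; exact Finset.mem_singleton_self w
  rw [Finset.mem_erase, Finset.mem_erase] at hwm
  obtain ⟨hwv, hwu, hwe⟩ := hwm
  refine ⟨w, hwu, hwv, ?_⟩
  have hsub : ({u,v,w} : Finset (Fin n)) ⊆ e := by
    intro i hi
    simp only [Finset.mem_insert, Finset.mem_singleton] at hi
    rcases hi with rfl | rfl | rfl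
    exacts [hu, hv, hwe]
  have hcard : ({u,v,w} : Finset (Fin n)).card = 3 := by
    have h1 : u ∉ ({v, w} : Finset (Fin n)) := by
      simp only [Finset.mem_insert, Finset.mem_singleton]
      push_neg
      exact ⟨huv, fun h => hwu h.symm⟩
    have h2 : v ∉ ({w} : Finset (Fin n)) := by
      simp only [Finset.mem_singleton]
      exact fun h => hwv h.symm
    rw [Finset.card_insert_of_notMem h1, Finset.card_insert_of_notMem h2,
      Finset.card_singleton]
  exact (Finset.eq_of_subset_of_card_le hsub (by rw [he, hcard])).symm

lemma erase_tr_a {a b c : Fin n} (hab : a ≠ b) (hac : a ≠ c) :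
    ({a,b,c} : Finset (Fin n)).erase a = {b,c} :=
  Finset.erase_insert (by simp [hab, hac])

lemma erase_tr_b {a b c : Fin n} (hab : a ≠ b) (hbc : b ≠ c) :
    ({a,b,c} : Finset (Fin n)).erase b = {a,c} := by
  ext i
  simp only [Finset.mem_erase, Finset.mem_insert, Finset.mem_singleton]
  constructor
  · rintro ⟨h1, rfl | rfl | rfl⟩
    · exact Or.inl rfl
    · exact absurd rfl h1
    · exact Or.inr rfl
  · rintro (rfl | rfl)
    · exact ⟨fun h => hab h, Or.inl rfl⟩
    · exact ⟨fun h => hbc h.symm, Or.inr (Or.inr rfl)⟩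

lemma erase_tr_c {a b c : Fin n} (hac : a ≠ c) (hbc : b ≠ c) :
    ({a,b,c} : Finset (Fin n)).erase c = {a,b} := by
  ext i
  simp only [Finset.mem_erase, Finset.mem_insert, Finset.mem_singleton]
  constructor
  · rintro ⟨h1, rfl | rfl | rfl⟩
    · exact Or.inl rfl
    · exact Or.inr rfl
    · exact absurd rfl h1
  · rintro (rfl | rfl)
    · exact ⟨fun h => hac h, Or.inl rfl⟩
    · exact ⟨fun h => hbc h, Or.inr (Or.inl rfl)⟩

lemma sum_tr {f : Fin n → ℝ} {a b c : Fin n} (hab : a ≠ b) (hac : a ≠ c) (hbc : b ≠ c) :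
    ∑ i ∈ ({a,b,c} : Finset (Fin n)), f i = f a + f b + f c := by
  rw [show ({a,b,c} : Finset (Fin n)) = insert a {b,c} from rfl,
    Finset.sum_insert (by simp [hab, hac]), Finset.sum_pair hbc]
  ring

lemma tri_identity {e : Finset (Fin n)} (he : e.card = 3) (y : Fin n → ℝ) :
    ∑ w ∈ e, y w * (∑ z ∈ e.erase w, y z) = 2 * ∑ w ∈ e, ∏ z ∈ e.erase w, y z := by
  obtain ⟨a, b, c, hab, hac, hbc, rfl⟩ := Finset.card_eq_three.mp he
  rw [sum_tr hab hac hbc, sum_tr hab hac hbc, erase_tr_a hab hac, erase_tr_b hab hbc,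
    erase_tr_c hac hbc, Finset.sum_pair hbc, Finset.sum_pair hac, Finset.sum_pair hab,
    Finset.prod_pair hbc, Finset.prod_pair hac, Finset.prod_pair hab]
  ring

lemma pv_restrict (E : Finset (Finset (Fin n))) (x : Fin n → ℝ) (S : Finset (Fin n))
    (hS : ∀ i, i ∉ S → x i = 0) :
    pv E x = ∑ e ∈ E.filter (fun e => e ⊆ S), ∏ i ∈ e, x i := by
  unfold pv
  symm
  apply Finset.sum_subset (Finset.filter_subset _ _)
  intro e he hne
  simp only [Finset.mem_filter, he, true_and] at hne
  obtain ⟨w, hwe, hwS⟩ := Finset.not_subset.mp hne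
  exact Finset.prod_eq_zero hwe (hS w hwS)

lemma swap_filter {α β : Type*} (S : Finset α) (T : Finset β)
    (r : α → β → Prop) [∀ a b, Decidable (r a b)] (F : α → β → ℝ) :
    ∑ a ∈ S, ∑ b ∈ T.filter (fun b => r a b), F a b
      = ∑ b ∈ T, ∑ a ∈ S.filter (fun a => r a b), F a b := by
  simp_rw [Finset.sum_filter]
  exact Finset.sum_comm

theorem pv_le (E : Finset (Finset (Fin n))) (hE : IsThreeGraph E) (hC : Cancellative E) :
    ∀ x ∈ stdSimplex ℝ (Fin n), pv E x ≤ 1/27 := by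
  classical
  intro x hx
  obtain ⟨z, hzmem, hzmax⟩ := (isCompact_stdSimplex ℝ (Fin n)).exists_isMaxOn ⟨x, hx⟩
    (Continuous.continuousOn
      (continuous_finset_sum E fun e _ => continuous_finset_prod e fun i _ =>
        continuous_apply i))
  set J : Set ℕ := {j | ∃ w, (w ∈ stdSimplex ℝ (Fin n) ∧
      ∀ w' ∈ stdSimplex ℝ (Fin n), pv E w' ≤ pv E w) ∧
      (univ.filter (fun i => w i ≠ 0)).card = j} with hJ
  have hJne : J.Nonempty := ⟨_, z, ⟨hzmem, fun w hw => (isMaxOn_iff.mp hzmax) w hw⟩, rfl⟩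
  obtain ⟨y, ⟨hymem, hymax⟩, hycard⟩ := Nat.sInf_mem hJne
  have hxy : pv E x ≤ pv E y := hymax x hx
  suffices h : pv E y ≤ 1/27 by linarith
  set S : Finset (Fin n) := univ.filter (fun i => y i ≠ 0) with hSdef
  have hS0 : ∀ i, i ∉ S → y i = 0 := by
    intro i hi
    by_contra hy
    exact hi (Finset.mem_filter.mpr ⟨mem_univ i, hy⟩)
  have hSpos : ∀ i ∈ S, 0 < y i := by
    intro i hi
    exact lt_of_le_of_ne (hymem.1 i) (Ne.symm (Finset.mem_filter.mp hi).2)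
  have hpv : pv E y = ∑ e ∈ E.filter (fun e => e ⊆ S), ∏ i ∈ e, y i := pv_restrict E y S hS0
  set ES := E.filter (fun e => e ⊆ S) with hESdef
  by_cases hES : ES = ∅
  · rw [hpv, hES, Finset.sum_empty]; norm_num
  · obtain ⟨e₀, he₀⟩ := Finset.nonempty_iff_ne_empty.mpr hES
    have hESsub : ∀ e ∈ ES, e ∈ E ∧ e ⊆ S := fun e he => Finset.mem_filter.mp he
    have hs3 : 3 ≤ S.card := by
      obtain ⟨he₀E, he₀S⟩ := hESsub e₀ he₀
      calc 3 = e₀.card := (hE e₀ he₀E).symm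
        _ ≤ S.card := Finset.card_le_card he₀S
    -- every pair of support vertices is covered by an edge inside S
    have cover : ∀ u ∈ S, ∀ v ∈ S, u ≠ v → ∃ e ∈ ES, u ∈ e ∧ v ∈ e := by
      intro u hu v hv huv
      by_contra hno
      push_neg at hno
      have hW : Wc E y u v = 0 := by
        apply Finset.sum_eq_zero
        intro e he
        simp only [Finset.mem_filter] at he
        obtain ⟨heE, heu, hev⟩ := he
        have hnot : ¬ e ⊆ S := by
          intro hsub
          exact (hno e (Finset.mem_filter.mpr ⟨heE, hsub⟩) heu) hev
        obtain ⟨w, hwe, hwS⟩ := Finset.not_subset.mp hnot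
        have hwu : w ≠ u := fun h => hwS (h ▸ hu)
        have hwv : w ≠ v := fun h => hwS (h ▸ hv)
        exact Finset.prod_eq_zero
          (Finset.mem_erase.mpr ⟨hwv, Finset.mem_erase.mpr ⟨hwu, hwe⟩⟩) (hS0 w hwS)
      obtain ⟨y', hy'mem, hy'ge, hy'zero, hy'eq⟩ := shift_noW E hymem huv hW
      have hy'max : ∀ w' ∈ stdSimplex ℝ (Fin n), pv E w' ≤ pv E y' :=
        fun w' hw' => le_trans (hymax w' hw') hy'ge
      have hsupp : ∀ w₀ ∈ ({u, v} : Finset (Fin n)), y' w₀ = 0 →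
          (univ.filter (fun i => y' i ≠ 0)) ⊆ S.erase w₀ := by
        intro w₀ hw₀ hzero i hi
        have hy'i : y' i ≠ 0 := (Finset.mem_filter.mp hi).2
        have hiw₀ : i ≠ w₀ := fun h => hy'i (h ▸ hzero)
        refine Finset.mem_erase.mpr ⟨hiw₀, ?_⟩
        by_cases hiu : i = u
        · subst hiu; exact hu
        · by_cases hiv : i = v
          · subst hiv; exact hv
          · rw [hy'eq i hiu hiv] at hy'i
            exact Finset.mem_filter.mpr ⟨mem_univ i, hy'i⟩
      have hcard' : ∀ w₀ ∈ ({u, v} : Finset (Fin n)), y' w₀ = 0 → False := by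
        intro w₀ hw₀ hzero
        have h1 : (univ.filter (fun i => y' i ≠ 0)).card ≤ S.card - 1 := by
          calc (univ.filter (fun i => y' i ≠ 0)).card ≤ (S.erase w₀).card :=
                Finset.card_le_card (hsupp w₀ hw₀ hzero)
            _ = S.card - 1 := by
                rw [Finset.card_erase_of_mem]
                rcases Finset.mem_insert.mp hw₀ with rfl | h
                · exact hu
                · rw [Finset.mem_singleton.mp h]; exact hv
        have h2 : sInf J ≤ (univ.filter (fun i => y' i ≠ 0)).card :=
          Nat.sInf_le ⟨y', ⟨hy'mem, hy'max⟩, rfl⟩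
        omega
      rcases hy'zero with h | h
      · exact hcard' u (by simp) h
      · exact hcard' v (by simp) h
    -- uniqueness of covering edges
    have unique : ∀ u v : Fin n, u ≠ v → ∀ e₁ ∈ ES, ∀ e₂ ∈ ES,
        u ∈ e₁ → v ∈ e₁ → u ∈ e₂ → v ∈ e₂ → e₁ = e₂ := by
      intro u v huv e₁ he₁ e₂ he₂ hu1 hv1 hu2 hv2
      by_contra hne
      obtain ⟨he₁E, he₁S⟩ := hESsub e₁ he₁
      obtain ⟨he₂E, he₂S⟩ := hESsub e₂ he₂
      obtain ⟨w₁, hw₁u, hw₁v, he₁eq⟩ := exists_third (hE e₁ he₁E) hu1 hv1 huv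
      obtain ⟨w₂, hw₂u, hw₂v, he₂eq⟩ := exists_third (hE e₂ he₂E) hu2 hv2 huv
      have hw12 : w₁ ≠ w₂ := by
        intro h
        exact hne (by rw [he₁eq, he₂eq, h])
      have hw₁S : w₁ ∈ S := he₁S (by rw [he₁eq]; simp)
      have hw₂S : w₂ ∈ S := he₂S (by rw [he₂eq]; simp)
      obtain ⟨A, hA, hw₁A, hw₂A⟩ := cover w₁ hw₁S w₂ hw₂S hw12
      obtain ⟨hAE, _⟩ := hESsub A hA
      have hAne1 : A ≠ e₁ := by
        intro h
        rw [h, he₁eq] at hw₂A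
        simp only [Finset.mem_insert, Finset.mem_singleton] at hw₂A
        rcases hw₂A with h' | h' | h'
        exacts [hw₂u h', hw₂v h', hw12 h'.symm]
      have hAne2 : A ≠ e₂ := by
        intro h
        rw [h, he₂eq] at hw₁A
        simp only [Finset.mem_insert, Finset.mem_singleton] at hw₁A
        rcases hw₁A with h' | h' | h'
        exacts [hw₁u h', hw₁v h', hw12 h']
      apply hC A hAE e₁ he₁E e₂ he₂E hAne1 hAne2 hne
      intro i hi
      rw [Finset.mem_symmDiff] at hi
      rcases hi with ⟨hi1, hi2⟩ | ⟨hi2, hi1⟩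
      · rw [he₁eq] at hi1
        simp only [Finset.mem_insert, Finset.mem_singleton] at hi1
        rcases hi1 with rfl | rfl | rfl
        · exact absurd (by rw [he₂eq]; simp) hi2
        · exact absurd (by rw [he₂eq]; simp) hi2
        · exact hw₁A
      · rw [he₂eq] at hi2
        simp only [Finset.mem_insert, Finset.mem_singleton] at hi2
        rcases hi2 with rfl | rfl | rfl
        · exact absurd (by rw [he₁eq]; simp) hi1
        · exact absurd (by rw [he₁eq]; simp) hi1
        · exact hw₂A
    -- mv is constant on S
    obtain ⟨s₀, hs₀⟩ := Finset.card_pos.mp (by omega : 0 < S.card)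
    set c := mv E y s₀ with hcdef
    have hconst : ∀ v ∈ S, mv E y v = c := by
      intro v hv
      by_cases hvs : v = s₀
      · rw [hvs]
      · exact kkt E hymem hymax hvs (hSpos v hv) (hSpos s₀ hs₀)
    -- Id1 : ∑ v ∈ S, y v * mv E y v = 3 * pv E y
    have Id1 : ∑ v ∈ S, y v * mv E y v = 3 * pv E y := by
      have step1 : ∀ v ∈ S, y v * mv E y v
          = ∑ e ∈ E.filter (fun e => v ∈ e), y v * ∏ i ∈ e.erase v, y i := by
        intro v _
        rw [mv, Finset.mul_sum]
      rw [Finset.sum_congr rfl step1, swap_filter S E (fun v e => v ∈ e)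
        (fun v e => y v * ∏ i ∈ e.erase v, y i)]
      unfold pv
      rw [Finset.mul_sum]
      refine Finset.sum_congr rfl fun e heE => ?_
      by_cases hsub : e ⊆ S
      · have hfe : S.filter (fun v => v ∈ e) = e :=
          Finset.ext fun i => ⟨fun h => (Finset.mem_filter.mp h).2,
            fun h => Finset.mem_filter.mpr ⟨hsub h, h⟩⟩
        rw [hfe]
        have : ∀ v ∈ e, y v * ∏ i ∈ e.erase v, y i = ∏ i ∈ e, y i :=
          fun v hv => Finset.mul_prod_erase e y hv
        rw [Finset.sum_congr rfl this, Finset.sum_const, hE e heE, nsmul_eq_mul]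
        norm_num
      · obtain ⟨w, hwe, hwS⟩ := Finset.not_subset.mp hsub
        have hrhs : ∏ i ∈ e, y i = 0 := Finset.prod_eq_zero hwe (hS0 w hwS)
        rw [hrhs, mul_zero]
        apply Finset.sum_eq_zero
        intro v hv
        obtain ⟨hvS, hve⟩ := Finset.mem_filter.mp hv
        have hwv : w ≠ v := fun h => hwS (h ▸ hvS)
        rw [Finset.prod_eq_zero (Finset.mem_erase.mpr ⟨hwv, hwe⟩) (hS0 w hwS), mul_zero]
    -- Id2 : ∑ v ∈ S, mv E y v = ∑ e ∈ ES, ∑ v ∈ e, ∏ i ∈ e.erase v, y i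
    have Id2 : ∑ v ∈ S, mv E y v = ∑ e ∈ ES, ∑ v ∈ e, ∏ i ∈ e.erase v, y i := by
      unfold mv
      rw [swap_filter S E (fun v e => v ∈ e) (fun v e => ∏ i ∈ e.erase v, y i)]
      rw [hESdef, Finset.sum_filter]
      refine Finset.sum_congr rfl fun e heE => ?_
      by_cases hsub : e ⊆ S
      · rw [if_pos hsub]
        congr 1
        exact Finset.ext fun i => ⟨fun h => (Finset.mem_filter.mp h).2,
          fun h => Finset.mem_filter.mpr ⟨hsub h, h⟩⟩
      · rw [if_neg hsub]
        obtain ⟨w, hwe, hwS⟩ := Finset.not_subset.mp hsub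
        apply Finset.sum_eq_zero
        intro v hv
        obtain ⟨hvS, hve⟩ := Finset.mem_filter.mp hv
        have hwv : w ≠ v := fun h => hwS (h ▸ hvS)
        exact Finset.prod_eq_zero (Finset.mem_erase.mpr ⟨hwv, hwe⟩) (hS0 w hwS)
    -- total weight of S is 1
    have hsum1 : ∑ v ∈ S, y v = 1 := by
      have := Finset.sum_filter_add_sum_filter_not univ (fun i => y i ≠ 0) y
      have h2 : ∑ i ∈ univ.filter (fun i => ¬ y i ≠ 0), y i = 0 := by
        apply Finset.sum_eq_zero
        intro i hi
        have := (Finset.mem_filter.mp hi).2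
        push_neg at this
        exact this
      rw [h2, add_zero] at this
      rw [hSdef, this, hymem.2]
    -- pair sum identities
    set Q := ∑ v ∈ S, (y v)^2 with hQdef
    have PSa : ∑ v ∈ S, y v * (∑ w ∈ S.erase v, y w) = 1 - Q := by
      have h1 : ∀ v ∈ S, y v * (∑ w ∈ S.erase v, y w) = y v - (y v)^2 := by
        intro v hv
        have := Finset.add_sum_erase S y hv
        have h2 : ∑ w ∈ S.erase v, y w = 1 - y v := by rw [← hsum1]; linarith
        rw [h2]; ring
      rw [Finset.sum_congr rfl h1, Finset.sum_sub_distrib, hsum1, ← hQdef]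
    have PSb : ∑ v ∈ S, y v * (∑ w ∈ S.erase v, y w)
        = ∑ e ∈ ES, ∑ v ∈ e, y v * (∑ w ∈ e.erase v, y w) := by
      have hpart : ∀ v ∈ S, S.erase v = (ES.filter (fun e => v ∈ e)).biUnion
          (fun e => e.erase v) := by
        intro v hv
        ext w
        simp only [Finset.mem_biUnion, Finset.mem_filter, Finset.mem_erase]
        constructor
        · rintro ⟨hwv, hwS⟩
          obtain ⟨e, he, hve, hwe⟩ := cover v hv w hwS (Ne.symm hwv)
          exact ⟨e, ⟨he, hve⟩, hwv, hwe⟩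
        · rintro ⟨e, ⟨heES, hve⟩, hwv, hwe⟩
          exact ⟨hwv, (hESsub e heES).2 hwe⟩
      have hdisj : ∀ v ∈ S, ∀ e₁ ∈ (ES.filter (fun e => v ∈ e)),
          ∀ e₂ ∈ (ES.filter (fun e => v ∈ e)), e₁ ≠ e₂ →
          Disjoint (e₁.erase v) (e₂.erase v) := by
        intro v hv e₁ he₁ e₂ he₂ hne
        rw [Finset.disjoint_left]
        intro w hw1 hw2
        obtain ⟨he₁ES, hve₁⟩ := Finset.mem_filter.mp he₁
        obtain ⟨he₂ES, hve₂⟩ := Finset.mem_filter.mp he₂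
        rw [Finset.mem_erase] at hw1 hw2
        exact hne (unique v w (Ne.symm hw1.1) e₁ he₁ES e₂ he₂ES hve₁ hw1.2 hve₂ hw2.2)
      have step : ∀ v ∈ S, y v * (∑ w ∈ S.erase v, y w)
          = ∑ e ∈ ES.filter (fun e => v ∈ e), y v * (∑ w ∈ e.erase v, y w) := by
        intro v hv
        rw [hpart v hv, Finset.sum_biUnion]
        · rw [Finset.mul_sum]
        · intro e₁ he₁ e₂ he₂ hne
          exact hdisj v hv e₁ he₁ e₂ he₂ hne
      rw [Finset.sum_congr rfl step, swap_filter S ES (fun v e => v ∈ e)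
        (fun v e => y v * (∑ w ∈ e.erase v, y w))]
      refine Finset.sum_congr rfl fun e heES => ?_
      congr 1
      exact Finset.ext fun i => ⟨fun h => (Finset.mem_filter.mp h).2,
        fun h => Finset.mem_filter.mpr ⟨(hESsub e heES).2 h, h⟩⟩
    -- combine
    have htri : ∑ e ∈ ES, ∑ v ∈ e, y v * (∑ w ∈ e.erase v, y w)
        = 2 * ∑ e ∈ ES, ∑ v ∈ e, ∏ i ∈ e.erase v, y i := by
      rw [Finset.mul_sum]
      exact Finset.sum_congr rfl fun e heES => tri_identity (hE e (hESsub e heES).1) y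
    have hconstsum : ∑ v ∈ S, mv E y v = S.card * c := by
      rw [Finset.sum_congr rfl hconst, Finset.sum_const, nsmul_eq_mul]
    have hid1' : c = 3 * pv E y := by
      have : ∑ v ∈ S, y v * mv E y v = ∑ v ∈ S, y v * c :=
        Finset.sum_congr rfl fun v hv => by rw [hconst v hv]
      rw [this, ← Finset.sum_mul, hsum1, one_mul] at Id1
      exact Id1
    have hmain : 1 - Q = 2 * (S.card * c) := by
      rw [← PSa, PSb, htri, ← Id2, hconstsum]
    have hcs : (1:ℝ) ≤ S.card * Q := by
      have := sq_sum_le_card_mul_sum_sq (s := S) (f := y)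
      rw [hsum1] at this
      simpa [hQdef] using this
    have hsR : (3:ℝ) ≤ (S.card : ℝ) := by exact_mod_cast hs3
    have hfin : 6 * (S.card : ℝ) * pv E y = 1 - Q := by
      rw [hmain, hid1']; ring
    nlinarith [mul_nonneg (by linarith : (0:ℝ) ≤ 2*(S.card:ℝ) - 3)
      (by linarith : (0:ℝ) ≤ (S.card:ℝ) - 3), sq_nonneg ((S.card:ℝ)), hsR,
      mul_pos (by linarith : (0:ℝ) < (S.card:ℝ)) (by linarith : (0:ℝ) < (S.card:ℝ))]

def cdeg (E : Finset (Finset (Fin n))) (u v : Fin n) : ℕ :=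
  (E.filter fun e => u ∈ e ∧ v ∈ e).card

def dg (E : Finset (Finset (Fin n))) (v : Fin n) : ℕ :=
  (E.filter fun e => v ∈ e).card

lemma cdeg_comm (E : Finset (Finset (Fin n))) (u v : Fin n) : cdeg E u v = cdeg E v u := by
  unfold cdeg
  congr 1
  exact Finset.filter_congr fun e _ => and_comm

lemma filter_univ_mem (e : Finset (Fin n)) : univ.filter (fun v => v ∈ e) = e := by
  ext i; simp

lemma sum_dg (E : Finset (Finset (Fin n))) (hE : IsThreeGraph E) :
    ∑ v, dg E v = 3 * E.card := by
  unfold dg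
  simp_rw [Finset.card_filter]
  rw [Finset.sum_comm]
  have h : ∀ e ∈ E, (∑ v : Fin n, if v ∈ e then 1 else 0) = 3 := by
    intro e he
    rw [← Finset.card_filter, filter_univ_mem, hE e he]
  rw [Finset.sum_congr rfl h, Finset.sum_const, smul_eq_mul, mul_comm]

lemma sum_cdeg (E : Finset (Finset (Fin n))) (hE : IsThreeGraph E) (v : Fin n) :
    ∑ w ∈ univ.erase v, cdeg E v w = 2 * dg E v := by
  unfold cdeg dg
  simp_rw [Finset.card_filter]
  rw [Finset.sum_comm]
  have h : ∀ e ∈ E, (∑ w ∈ univ.erase v, if v ∈ e ∧ w ∈ e then 1 else 0)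
      = if v ∈ e then 2 else 0 := by
    intro e he
    by_cases hv : v ∈ e
    · rw [if_pos hv]
      have h1 : ∀ w ∈ univ.erase v, (if v ∈ e ∧ w ∈ e then 1 else 0)
          = if w ∈ e then 1 else 0 := by
        intro w _
        by_cases hw : w ∈ e <;> simp [hv, hw]
      rw [Finset.sum_congr rfl h1, ← Finset.card_filter]
      have h2 : (univ.erase v).filter (fun w => w ∈ e) = e.erase v := by
        ext i; simp [Finset.mem_erase, and_comm]
      rw [h2, Finset.card_erase_of_mem hv, hE e he]
    · rw [if_neg hv]
      apply Finset.sum_eq_zero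
      intro w _
      simp [hv]
  rw [Finset.sum_congr rfl h, Finset.sum_ite, Finset.sum_const, Finset.sum_const]
  simp [mul_comm]

lemma uniform_mem (hn : 0 < n) : (fun _ : Fin n => (1:ℝ)/n) ∈ stdSimplex ℝ (Fin n) := by
  constructor
  · intro i
    positivity
  · rw [Finset.sum_const, Finset.card_univ, Fintype.card_fin, nsmul_eq_mul]
    field_simp

lemma pv_uniform (E : Finset (Finset (Fin n))) (hE : IsThreeGraph E) :
    pv E (fun _ : Fin n => (1:ℝ)/n) = E.card * (1/n)^3 := by
  unfold pv
  have h : ∀ e ∈ E, (∏ _i ∈ e, (1:ℝ)/n) = (1/n)^3 := by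
    intro e he
    rw [Finset.prod_const, hE e he]
  rw [Finset.sum_congr rfl h, Finset.sum_const, nsmul_eq_mul]

lemma mv_uniform (E : Finset (Finset (Fin n))) (hE : IsThreeGraph E) (v : Fin n) :
    mv E (fun _ : Fin n => (1:ℝ)/n) v = dg E v * (1/n)^2 := by
  unfold mv dg
  have h : ∀ e ∈ E.filter (fun e => v ∈ e), (∏ _i ∈ e.erase v, (1:ℝ)/n) = (1/n)^2 := by
    intro e he
    obtain ⟨heE, hve⟩ := Finset.mem_filter.mp he
    rw [Finset.prod_const, Finset.card_erase_of_mem hve, hE e heE]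
  rw [Finset.sum_congr rfl h, Finset.sum_const, nsmul_eq_mul]

section Equality

variable {k : ℕ} {E : Finset (Finset (Fin n))}

lemma pv_uniform_eq (hE : IsThreeGraph E) (hk : 0 < k) (hn : n = 3*k)
    (hcard : E.card = k^3) : pv E (fun _ : Fin n => (1:ℝ)/n) = 1/27 := by
  rw [pv_uniform E hE, hcard, hn]
  have hk' : (0:ℝ) < k := by exact_mod_cast hk
  push_cast
  field_simp
  ring

lemma unif_max (hE : IsThreeGraph E) (hC : Cancellative E) (hk : 0 < k) (hn : n = 3*k)
    (hcard : E.card = k^3) :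
    ∀ y ∈ stdSimplex ℝ (Fin n), pv E y ≤ pv E (fun _ : Fin n => (1:ℝ)/n) := by
  intro y hy
  rw [pv_uniform_eq hE hk hn hcard]
  exact pv_le E hE hC y hy

lemma dg_eq (hE : IsThreeGraph E) (hC : Cancellative E) (hk : 0 < k) (hn : n = 3*k)
    (hcard : E.card = k^3) : ∀ v, dg E v = k^2 := by
  have hnpos : 0 < n := by omega
  have hmem := uniform_mem (n := n) hnpos
  have hmax := unif_max hE hC hk hn hcard
  have hdeq : ∀ u v : Fin n, dg E u = dg E v := by
    intro u v
    by_cases huv : u = v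
    · rw [huv]
    · have hnR : (0:ℝ) < n := by exact_mod_cast hnpos
      have hpos : (0:ℝ) < 1 / n := div_pos one_pos hnR
      have h := kkt E hmem hmax huv hpos hpos
      rw [mv_uniform E hE, mv_uniform E hE] at h
      have hne : ((1:ℝ)/n)^2 ≠ 0 := by positivity
      have := mul_right_cancel₀ hne h
      exact_mod_cast this
  intro v
  have hsum := sum_dg E hE
  have hconst : ∀ w ∈ (univ : Finset (Fin n)), dg E w = dg E v := fun w _ => hdeq w v
  rw [Finset.sum_congr rfl hconst, Finset.sum_const, Finset.card_univ, Fintype.card_fin,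
    smul_eq_mul, hcard] at hsum
  have hsum2 : 3 * k * dg E v = 3 * k ^ 3 := by rw [← hn]; exact hsum
  have hsum' : 3 * (k * dg E v) = 3 * (k * k ^ 2) := by
    calc 3 * (k * dg E v) = 3 * k * dg E v := by ring
      _ = 3 * k ^ 3 := hsum2
      _ = 3 * (k * k ^ 2) := by ring
  exact Nat.eq_of_mul_eq_mul_left hk
    (Nat.eq_of_mul_eq_mul_left (by norm_num : 0 < 3) hsum')

lemma twin (hE : IsThreeGraph E) (hC : Cancellative E) (hk : 0 < k) (hn : n = 3*k)
    (hcard : E.card = k^3) {u v : Fin n} (huv : u ≠ v) (h0 : cdeg E u v = 0) :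
    ∀ a, a ≠ u → a ≠ v → cdeg E a u = cdeg E a v := by
  intro a hau hav
  have hnpos : 0 < n := by omega
  have hnR : (0:ℝ) < n := by exact_mod_cast hnpos
  have hmem := uniform_mem (n := n) hnpos
  have hmax := unif_max hE hC hk hn hcard
  have hfilter0 : E.filter (fun e => u ∈ e ∧ v ∈ e) = ∅ := Finset.card_eq_zero.mp h0
  have hnoedge : ∀ e ∈ E, u ∈ e → v ∈ e → False := by
    intro e he hu hv
    have : e ∈ E.filter (fun e => u ∈ e ∧ v ∈ e) := Finset.mem_filter.mpr ⟨he, hu, hv⟩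
    rw [hfilter0] at this
    exact absurd this (Finset.notMem_empty e)
  have hW : Wc E (fun _ : Fin n => (1:ℝ)/n) u v = 0 := by
    unfold Wc
    rw [hfilter0, Finset.sum_empty]
  have hmveq : mv E (fun _ : Fin n => (1:ℝ)/n) u = mv E (fun _ : Fin n => (1:ℝ)/n) v := by
    rw [mv_uniform E hE, mv_uniform E hE, dg_eq hE hC hk hn hcard, dg_eq hE hC hk hn hcard]
  -- the shifted point
  set y := shft (fun _ : Fin n => (1:ℝ)/n) u v ((1:ℝ)/n) with hydef
  have hymem : y ∈ stdSimplex ℝ (Fin n) :=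
    shft_mem huv hmem
      (by simpa using neg_le_self (le_of_lt (div_pos one_pos hnR))) le_rfl
  have hypv : pv E y = pv E (fun _ : Fin n => (1:ℝ)/n) := by
    rw [hydef, master E huv _ _, hW, hmveq]
    ring
  have hymax : ∀ w' ∈ stdSimplex ℝ (Fin n), pv E w' ≤ pv E y := by
    intro w' hw'
    rw [hypv]
    exact hmax w' hw'
  have hyu : y u = 2/n := by rw [hydef, shft_u huv]; ring
  have hyv : y v = 0 := by rw [hydef, shft_v]; ring
  have hyother : ∀ i, i ≠ u → i ≠ v → y i = 1/n := fun i h1 h2 => shft_other h1 h2 _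
  -- KKT at y for the pair (a, u)
  have hkkt := kkt E hymem hymax hau
    (by rw [hyother a hau hav]; exact div_pos one_pos hnR)
    (by rw [hyu]; exact div_pos two_pos hnR)
  -- compute mv E y u
  have hmvu : mv E y u = (k^2 : ℝ) * (1/n)^2 := by
    unfold mv
    have h : ∀ e ∈ E.filter (fun e => u ∈ e), (∏ i ∈ e.erase u, y i) = (1/n)^2 := by
      intro e he
      obtain ⟨heE, hue⟩ := Finset.mem_filter.mp he
      have hcongr : ∀ i ∈ e.erase u, y i = 1/n := by
        intro i hi
        obtain ⟨hiu, hie⟩ := Finset.mem_erase.mp hi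
        refine hyother i hiu (fun hiv => ?_)
        exact hnoedge e heE hue (hiv ▸ hie)
      rw [Finset.prod_congr rfl hcongr, Finset.prod_const,
        Finset.card_erase_of_mem hue, hE e heE]
    rw [Finset.sum_congr rfl h, Finset.sum_const, nsmul_eq_mul]
    have h2 : (E.filter (fun e => u ∈ e)).card = k^2 := dg_eq hE hC hk hn hcard u
    rw [h2]
    push_cast
    ring
  -- decompose mv E y a
  have hsplit1 := Finset.sum_filter_add_sum_filter_not (E.filter (fun e => a ∈ e))
    (fun e => v ∈ e) (fun e => ∏ i ∈ e.erase a, y i)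
  have hsplit2 := Finset.sum_filter_add_sum_filter_not
    ((E.filter (fun e => a ∈ e)).filter (fun e => ¬ v ∈ e))
    (fun e => u ∈ e) (fun e => ∏ i ∈ e.erase a, y i)
  have hP1 : ∑ e ∈ (E.filter (fun e => a ∈ e)).filter (fun e => v ∈ e),
      ∏ i ∈ e.erase a, y i = 0 := by
    apply Finset.sum_eq_zero
    intro e he
    obtain ⟨he1, hve⟩ := Finset.mem_filter.mp he
    have hae := (Finset.mem_filter.mp he1).2
    have hva : v ≠ a := fun h => hav h.symm
    exact Finset.prod_eq_zero (Finset.mem_erase.mpr ⟨hva, hve⟩) hyv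
  have hval2 : ∀ e ∈ ((E.filter (fun e => a ∈ e)).filter (fun e => ¬ v ∈ e)).filter
      (fun e => u ∈ e), (∏ i ∈ e.erase a, y i) = (2/n) * (1/n) := by
    intro e he
    obtain ⟨he2, hue⟩ := Finset.mem_filter.mp he
    obtain ⟨he1, hve⟩ := Finset.mem_filter.mp he2
    obtain ⟨heE, hae⟩ := Finset.mem_filter.mp he1
    have huea : u ∈ e.erase a := Finset.mem_erase.mpr ⟨fun h => hau h.symm, hue⟩
    rw [← Finset.mul_prod_erase _ _ huea, hyu]
    have hcongr : ∀ i ∈ (e.erase a).erase u, y i = 1/n := by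
      intro i hi
      rw [Finset.mem_erase, Finset.mem_erase] at hi
      exact hyother i hi.1 (fun hiv => hve (hiv ▸ hi.2.2))
    have hc : ((e.erase a).erase u).card = 1 := by
      rw [Finset.card_erase_of_mem huea, Finset.card_erase_of_mem hae, hE e heE]
    rw [Finset.prod_congr rfl hcongr, Finset.prod_const, hc]
    ring
  have hP2 : ∑ e ∈ ((E.filter (fun e => a ∈ e)).filter (fun e => ¬ v ∈ e)).filter
      (fun e => u ∈ e), ∏ i ∈ e.erase a, y i
      = (((E.filter (fun e => a ∈ e)).filter (fun e => ¬ v ∈ e)).filter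
        (fun e => u ∈ e)).card * ((2/n) * (1/n)) := by
    rw [Finset.sum_congr rfl hval2, Finset.sum_const, nsmul_eq_mul]
  have hval3 : ∀ e ∈ ((E.filter (fun e => a ∈ e)).filter (fun e => ¬ v ∈ e)).filter
      (fun e => ¬ u ∈ e), (∏ i ∈ e.erase a, y i) = (1/n) * (1/n) := by
    intro e he
    obtain ⟨he2, hue⟩ := Finset.mem_filter.mp he
    obtain ⟨he1, hve⟩ := Finset.mem_filter.mp he2
    obtain ⟨heE, hae⟩ := Finset.mem_filter.mp he1
    have hcongr : ∀ i ∈ e.erase a, y i = 1/n := by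
      intro i hi
      obtain ⟨hia, hie⟩ := Finset.mem_erase.mp hi
      exact hyother i (fun hiu => hue (hiu ▸ hie)) (fun hiv => hve (hiv ▸ hie))
    rw [Finset.prod_congr rfl hcongr, Finset.prod_const,
      Finset.card_erase_of_mem hae, hE e heE]
    ring
  have hP3 : ∑ e ∈ ((E.filter (fun e => a ∈ e)).filter (fun e => ¬ v ∈ e)).filter
      (fun e => ¬ u ∈ e), ∏ i ∈ e.erase a, y i
      = (((E.filter (fun e => a ∈ e)).filter (fun e => ¬ v ∈ e)).filter
        (fun e => ¬ u ∈ e)).card * ((1/n) * (1/n)) := by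
    rw [Finset.sum_congr rfl hval3, Finset.sum_const, nsmul_eq_mul]
  -- name the three cardinalities
  set c1 := ((E.filter (fun e => a ∈ e)).filter (fun e => v ∈ e)).card with hc1
  set c2 := (((E.filter (fun e => a ∈ e)).filter (fun e => ¬ v ∈ e)).filter
    (fun e => u ∈ e)).card with hc2
  set c3 := (((E.filter (fun e => a ∈ e)).filter (fun e => ¬ v ∈ e)).filter
    (fun e => ¬ u ∈ e)).card with hc3
  have hcards : c1 + c2 + c3 = k^2 := by
    have h1 := Finset.card_filter_add_card_filter_not
      (s := E.filter (fun e => a ∈ e)) (p := fun e => v ∈ e)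
    have h2 := Finset.card_filter_add_card_filter_not
      (s := (E.filter (fun e => a ∈ e)).filter (fun e => ¬ v ∈ e)) (p := fun e => u ∈ e)
    have h3 : (E.filter (fun e => a ∈ e)).card = k^2 := dg_eq hE hC hk hn hcard a
    omega
  have hc1cd : c1 = cdeg E a v := by
    rw [hc1]
    unfold cdeg
    rw [Finset.filter_filter]
  have hc2cd : c2 = cdeg E a u := by
    rw [hc2]
    unfold cdeg
    congr 1
    ext e
    simp only [Finset.mem_filter]
    constructor
    · rintro ⟨⟨⟨heE, hae⟩, hve⟩, hue⟩
      exact ⟨heE, hae, hue⟩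
    · rintro ⟨heE, hae, hue⟩
      exact ⟨⟨⟨heE, hae⟩, fun hve => hnoedge e heE hue hve⟩, hue⟩
  -- the real equation
  have hmva : mv E y a = c2 * ((2/n) * (1/n)) + c3 * ((1/n) * (1/n)) := by
    unfold mv
    rw [← hsplit1, hP1, ← hsplit2, hP2, hP3]
    ring
  rw [hmva, hmvu] at hkkt
  have hreq : 2 * (c2:ℝ) + c3 = k^2 := by
    have hn2 : (0:ℝ) < (n:ℝ)^2 := by positivity
    field_simp at hkkt
    nlinarith [hkkt]
  have hnat : 2 * c2 + c3 = k^2 := by exact_mod_cast hreq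
  omega

end Equality

def cls (E : Finset (Finset (Fin n))) (v : Fin n) : Finset (Fin n) :=
  univ.filter (fun w => cdeg E v w = 0 ∨ w = v)

lemma mem_cls {E : Finset (Finset (Fin n))} {v w : Fin n} :
    w ∈ cls E v ↔ (cdeg E v w = 0 ∨ w = v) := by
  simp [cls]

lemma cls_self (E : Finset (Finset (Fin n))) (v : Fin n) : v ∈ cls E v :=
  mem_cls.mpr (Or.inr rfl)

lemma cls_symm {E : Finset (Finset (Fin n))} {v w : Fin n} (h : w ∈ cls E v) :
    v ∈ cls E w := by
  rw [mem_cls] at h ⊢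
  rcases h with h | h
  · left; rw [cdeg_comm]; exact h
  · right; exact h.symm

lemma cdeg_ne_zero_of_edge {E : Finset (Finset (Fin n))} {e : Finset (Fin n)} (he : e ∈ E)
    {a b : Fin n} (ha : a ∈ e) (hb : b ∈ e) : cdeg E a b ≠ 0 := by
  unfold cdeg
  exact Finset.card_ne_zero_of_mem (Finset.mem_filter.mpr ⟨he, ha, hb⟩)

lemma not_mem_cls {E : Finset (Finset (Fin n))} {e : Finset (Fin n)} (he : e ∈ E)
    {a b : Fin n} (ha : a ∈ e) (hb : b ∈ e) (hab : a ≠ b) : b ∉ cls E a := by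
  rw [mem_cls]
  push_neg
  exact ⟨cdeg_ne_zero_of_edge he ha hb, fun h => hab h.symm⟩

section Equality2

variable {k : ℕ} {E : Finset (Finset (Fin n))}

lemma cls_trans (hE : IsThreeGraph E) (hC : Cancellative E) (hk : 0 < k) (hn : n = 3*k)
    (hcard : E.card = k^3) {v w z : Fin n} (h1 : w ∈ cls E v) (h2 : z ∈ cls E w) :
    z ∈ cls E v := by
  rw [mem_cls] at h1 h2 ⊢
  by_cases hzv : z = v
  · exact Or.inr hzv
  left
  rcases h1 with h1 | h1
  · rcases h2 with h2 | h2
    · by_cases hwv : w = v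
      · rw [hwv] at h2; exact h2
      by_cases hwz : w = z
      · rw [← hwz]; exact h1
      · have ht := twin hE hC hk hn hcard hwz h2 v (fun h => hwv h.symm) (fun h => hzv h.symm)
        rw [← ht]; exact h1
    · rw [h2]; exact h1
  · rcases h2 with h2 | h2
    · rw [h1] at h2; exact h2
    · exact absurd (h2.trans h1) hzv

lemma cls_eq_of_mem (hE : IsThreeGraph E) (hC : Cancellative E) (hk : 0 < k) (hn : n = 3*k)
    (hcard : E.card = k^3) {v w : Fin n} (h : w ∈ cls E v) : cls E w = cls E v := by
  ext z
  constructor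
  · intro hz
    exact cls_trans hE hC hk hn hcard h hz
  · intro hz
    exact cls_trans hE hC hk hn hcard (cls_symm h) hz

lemma cls_glue (hE : IsThreeGraph E) (hC : Cancellative E) (hk : 0 < k) (hn : n = 3*k)
    (hcard : E.card = k^3) {v w z : Fin n} (h1 : z ∈ cls E v) (h2 : z ∈ cls E w) :
    w ∈ cls E v := by
  have e1 := cls_eq_of_mem hE hC hk hn hcard h1
  have e2 := cls_eq_of_mem hE hC hk hn hcard h2
  rw [← e1, e2]
  exact cls_self E w

end Equality2

def thrd (u w : Fin n) (e : Finset (Fin n)) : Fin n :=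
  if h : ((e.erase u).erase w).Nonempty then ((e.erase u).erase w).min' h else u

lemma thrd_spec {E : Finset (Finset (Fin n))} (hE : IsThreeGraph E) {e : Finset (Fin n)}
    (he : e ∈ E) {u w : Fin n} (hu : u ∈ e) (hw : w ∈ e) (huw : u ≠ w) :
    thrd u w e ∈ e ∧ thrd u w e ≠ u ∧ thrd u w e ≠ w ∧ e = {u, w, thrd u w e} := by
  obtain ⟨z, hz1, hz2, hz3⟩ := exists_third (hE e he) hu hw huw
  have hset : (e.erase u).erase w = {z} := by
    rw [hz3, erase_tr_a huw (fun h => hz1 h.symm)]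
    exact Finset.erase_insert
      (by simp only [Finset.mem_singleton]; exact fun h => hz2 h.symm)
  have hne : ((e.erase u).erase w).Nonempty := by
    rw [hset]; exact ⟨z, Finset.mem_singleton_self z⟩
  have hmem : thrd u w e ∈ (e.erase u).erase w := by
    unfold thrd
    rw [dif_pos hne]
    exact Finset.min'_mem _ hne
  have heq : thrd u w e = z := by
    rw [hset] at hmem
    exact Finset.mem_singleton.mp hmem
  rw [heq]
  exact ⟨hz3 ▸ (by simp : z ∈ ({u,w,z} : Finset (Fin n))), hz1, hz2, hz3⟩

section Equality3

variable {k : ℕ} {E : Finset (Finset (Fin n))}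

lemma cdeg_bound (hE : IsThreeGraph E) (hC : Cancellative E)
    {u w : Fin n} (huw : u ≠ w) (hpos : cdeg E u w ≠ 0) :
    ∃ z₀, z₀ ≠ u ∧ z₀ ≠ w ∧ (∃ e₀ ∈ E, u ∈ e₀ ∧ w ∈ e₀ ∧ z₀ ∈ e₀) ∧
      cdeg E u w ≤ (cls E z₀).card ∧
      (∀ S : Finset (Fin n), cls E z₀ ⊆ S → S.card = cdeg E u w →
        ∀ z ∈ S, ∃ e ∈ E, u ∈ e ∧ w ∈ e ∧ z ∈ e) := by
  classical
  set F := E.filter (fun e => u ∈ e ∧ w ∈ e) with hF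
  have hFne : F.Nonempty := Finset.card_pos.mp (Nat.pos_of_ne_zero hpos)
  obtain ⟨e₀, he₀⟩ := hFne
  have hFmem : ∀ e ∈ F, e ∈ E ∧ u ∈ e ∧ w ∈ e := by
    intro e he
    have := Finset.mem_filter.mp he
    exact ⟨this.1, this.2.1, this.2.2⟩
  obtain ⟨he₀E, hue₀, hwe₀⟩ := hFmem e₀ he₀
  set z₀ := thrd u w e₀ with hz₀
  obtain ⟨hz₀e, hz₀u, hz₀w, he₀eq⟩ := thrd_spec hE he₀E hue₀ hwe₀ huw
  -- distinct edges in F have distinct thirds, and all thirds lie in cls z₀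
  have hspec : ∀ e ∈ F, thrd u w e ∈ e ∧ thrd u w e ≠ u ∧ thrd u w e ≠ w ∧
      e = {u, w, thrd u w e} := by
    intro e he
    obtain ⟨heE, hue, hwe⟩ := hFmem e he
    exact thrd_spec hE heE hue hwe huw
  have hinj : Set.InjOn (thrd u w) ↑F := by
    intro e₁ h₁ e₂ h₂ heq
    rw [Finset.mem_coe] at h₁ h₂
    rw [(hspec e₁ h₁).2.2.2, (hspec e₂ h₂).2.2.2, heq]
  have hmapsto : ∀ e ∈ F, thrd u w e ∈ cls E z₀ := by
    intro e he
    obtain ⟨heE, hue, hwe⟩ := hFmem e he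
    obtain ⟨hze, hzu, hzw, heeq⟩ := hspec e he
    set z := thrd u w e with hz
    rw [mem_cls]
    by_cases hzz : z = z₀
    · exact Or.inr hzz
    left
    -- no edge contains both z₀ and z, by cancellativity
    by_contra hcd
    obtain ⟨A, hA⟩ := Finset.card_pos.mp (Nat.pos_of_ne_zero hcd)
    have hA' := Finset.mem_filter.mp hA
    have hAE := hA'.1
    have hz₀A := hA'.2.1
    have hzA := hA'.2.2
    have he₀ne : e₀ ≠ e := by
      intro h
      exact hzz (by rw [hz, ← h, ← hz₀])
    have hAne₀ : A ≠ e₀ := by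
      intro h
      rw [h, he₀eq] at hzA
      simp only [Finset.mem_insert, Finset.mem_singleton] at hzA
      rcases hzA with h' | h' | h'
      exacts [hzu h', hzw h', hzz h']
    have hAne : A ≠ e := by
      intro h
      rw [h, heeq] at hz₀A
      simp only [Finset.mem_insert, Finset.mem_singleton] at hz₀A
      rcases hz₀A with h' | h' | h'
      exacts [hz₀u h', hz₀w h', hzz h'.symm]
    apply hC A hAE e₀ he₀E e heE hAne₀ hAne he₀ne
    intro i hi
    rw [Finset.mem_symmDiff] at hi
    rcases hi with ⟨hi1, hi2⟩ | ⟨hi1, hi2⟩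
    · rw [he₀eq] at hi1
      simp only [Finset.mem_insert, Finset.mem_singleton] at hi1
      rcases hi1 with rfl | rfl | rfl
      · exact absurd (by rw [heeq]; simp) hi2
      · exact absurd (by rw [heeq]; simp) hi2
      · exact hz₀A
    · rw [heeq] at hi1
      simp only [Finset.mem_insert, Finset.mem_singleton] at hi1
      rcases hi1 with rfl | rfl | rfl
      · exact absurd (by rw [he₀eq]; simp) hi2
      · exact absurd (by rw [he₀eq]; simp) hi2
      · exact hzA
  have himage : F.image (thrd u w) ⊆ cls E z₀ := by
    intro z hz
    obtain ⟨e, he, rfl⟩ := Finset.mem_image.mp hz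
    exact hmapsto e he
  have hcardim : (F.image (thrd u w)).card = cdeg E u w := by
    rw [Finset.card_image_of_injOn hinj, hF]
    rfl
  refine ⟨z₀, hz₀u, hz₀w, ⟨e₀, he₀E, hue₀, hwe₀, hz₀e⟩, ?_, ?_⟩
  · rw [← hcardim]
    exact Finset.card_le_card himage
  · intro S hsub hcardS z hzS
    have h1 : F.image (thrd u w) ⊆ S := subset_trans himage hsub
    have h2 : F.image (thrd u w) = S :=
      Finset.eq_of_subset_of_card_le h1 (by rw [hcardim, hcardS])
    rw [← h2] at hzS
    obtain ⟨e, he, rfl⟩ := Finset.mem_image.mp hzS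
    obtain ⟨heE, hue, hwe⟩ := hFmem e he
    exact ⟨e, heE, hue, hwe, (hspec e he).1⟩

end Equality3

lemma int_solve {k a b c R : ℤ} (hk : 1 ≤ k) (hsum : a + b + R = 3*k) (hba : b ≤ a)
    (hcb : c ≤ b) (hcR : c ≤ R) (hc : 1 ≤ c) (hineq : 2*k^2 ≤ b*(c+R)) :
    a = k ∧ b = k ∧ c = k ∧ R = k := by
  have hbpos : 1 ≤ b := le_trans hc hcb
  have hbk : b ≤ k := by
    by_contra h
    push_neg at h
    have e1 : b*(c+R) ≤ b*(2*R) := by nlinarith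
    have e2 : R ≤ 3*k - 2*b := by linarith
    have e3 : b*(2*R) ≤ b*(2*(3*k-2*b)) := by nlinarith
    nlinarith [mul_pos (by linarith : (0:ℤ) < 2*b - k) (by linarith : (0:ℤ) < b - k)]
  have hck : c + R ≤ 3*k - b := by linarith
  have h2 : 2*k^2 ≤ b*(3*k - b) := by nlinarith
  have e5 : 0 ≤ (k - b)*(2*k - b) := mul_nonneg (by linarith) (by linarith)
  have h6 : b*(3*k - b) ≤ 2*k^2 := by nlinarith
  have h7 : b*(3*k - b) = 2*k^2 := le_antisymm h6 h2
  have e7 : (k - b)*(2*k - b) = 0 := by linear_combination - h7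
  have hbeq : b = k := by
    rcases mul_eq_zero.mp e7 with h | h
    · omega
    · omega
  subst hbeq
  have hRk : R ≤ b := by linarith
  have h8 : b*(2*b) ≤ b*(c+R) := by nlinarith
  have h9 : 2*b ≤ c + R := le_of_mul_le_mul_left h8 (by linarith)
  omega

lemma nat_solve {k a b c R : ℕ} (hk : 1 ≤ k) (hsum : a + b + R = 3*k) (hba : b ≤ a)
    (hcb : c ≤ b) (hcR : c ≤ R) (hc : 1 ≤ c) (hineq : 2*k^2 ≤ b*(c+R)) :
    a = k ∧ b = k ∧ c = k ∧ R = k := by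
  have h := int_solve (k := (k:ℤ)) (a := (a:ℤ)) (b := (b:ℤ)) (c := (c:ℤ)) (R := (R:ℤ))
    (by exact_mod_cast hk) (by exact_mod_cast hsum) (by exact_mod_cast hba)
    (by exact_mod_cast hcb) (by exact_mod_cast hcR) (by exact_mod_cast hc)
    (by exact_mod_cast hineq)
  exact ⟨by exact_mod_cast h.1, by exact_mod_cast h.2.1, by exact_mod_cast h.2.2.1,
    by exact_mod_cast h.2.2.2⟩

lemma all_eq_of_sum {α : Type*} {s : Finset α} {f : α → ℕ} {m : ℕ}
    (hle : ∀ x ∈ s, f x ≤ m) (hsum : ∑ x ∈ s, f x = s.card * m) : ∀ x ∈ s, f x = m := by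
  intro x hx
  by_contra h
  have hlt : f x < m := lt_of_le_of_ne (hle x hx) h
  have hstrict : ∑ y ∈ s, f y < ∑ _y ∈ s, m :=
    Finset.sum_lt_sum hle ⟨x, hx, hlt⟩
  rw [Finset.sum_const, smul_eq_mul] at hstrict
  omega

lemma fin3_cases (j : Fin 3) : j = 0 ∨ j = 1 ∨ j = 2 := by fin_cases j <;> simp

section Equality4

variable {k : ℕ} {E : Finset (Finset (Fin n))}

theorem structure_thm (hE : IsThreeGraph E) (hC : Cancellative E) (hk : 0 < k)
    (hn : n = 3*k) (hcard : E.card = k^3) :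
    ∃ P : Fin n → Fin 3,
      (∀ j : Fin 3, (univ.filter (fun i => P i = j)).card = k) ∧
      (∀ e : Finset (Fin n), e ∈ E ↔ ∀ j : Fin 3, (e.filter (fun i => P i = j)).card = 1) := by
  classical
  have hnpos : 0 < n := by omega
  have hdg := dg_eq hE hC hk hn hcard
  have hedge : ∀ v : Fin n, ∃ e ∈ E, v ∈ e := by
    intro v
    have hpos : 0 < dg E v := by rw [hdg v]; positivity
    obtain ⟨e, he⟩ := Finset.card_pos.mp hpos
    obtain ⟨heE, hve⟩ := Finset.mem_filter.mp he
    exact ⟨e, heE, hve⟩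
  obtain ⟨v₁, -, hv₁max⟩ := Finset.exists_max_image (univ : Finset (Fin n))
    (fun v => (cls E v).card) ⟨⟨0, hnpos⟩, mem_univ _⟩
  set C1 := cls E v₁ with hC1
  obtain ⟨e₁, he₁E, hv₁e₁⟩ := hedge v₁
  obtain ⟨x₁, hx₁⟩ := Finset.card_pos.mp (show 0 < (e₁.erase v₁).card by
    rw [Finset.card_erase_of_mem hv₁e₁, hE e₁ he₁E]; norm_num)
  obtain ⟨hx₁v₁, hx₁e₁⟩ := Finset.mem_erase.mp hx₁
  obtain ⟨y₁, hy₁v₁, hy₁x₁, he₁eq⟩ := exists_third (hE e₁ he₁E) hv₁e₁ hx₁e₁ (Ne.symm hx₁v₁)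
  set U2 := univ \ C1 with hU2
  have hx₁U2 : x₁ ∈ U2 := by
    rw [hU2, Finset.mem_sdiff]
    exact ⟨mem_univ _, not_mem_cls he₁E hv₁e₁ hx₁e₁ (Ne.symm hx₁v₁)⟩
  obtain ⟨v₂, hv₂U2, hv₂max⟩ := Finset.exists_max_image U2 (fun v => (cls E v).card)
    ⟨x₁, hx₁U2⟩
  set C2 := cls E v₂ with hC2
  have hv₂U2' := hv₂U2
  rw [hU2, Finset.mem_sdiff] at hv₂U2'
  have hC2sub : C2 ⊆ U2 := by
    intro z hz
    rw [hU2, Finset.mem_sdiff]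
    exact ⟨mem_univ _, fun hzC1 => hv₂U2'.2 (cls_glue hE hC hk hn hcard hzC1 hz)⟩
  set U3 := U2 \ C2 with hU3
  have hy₁e₁ : y₁ ∈ e₁ := by rw [he₁eq]; simp
  have hy₁U2 : y₁ ∈ U2 := by
    rw [hU2, Finset.mem_sdiff]
    exact ⟨mem_univ _, not_mem_cls he₁E hv₁e₁ hy₁e₁ (Ne.symm hy₁v₁)⟩
  have hU3ne : U3.Nonempty := by
    by_cases hx : x₁ ∈ C2
    · refine ⟨y₁, ?_⟩
      rw [hU3, Finset.mem_sdiff]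
      refine ⟨hy₁U2, fun hy => ?_⟩
      exact (not_mem_cls he₁E hx₁e₁ hy₁e₁ (fun h => hy₁x₁ h.symm))
        (cls_glue hE hC hk hn hcard (cls_symm hx) (cls_symm hy))
    · exact ⟨x₁, by rw [hU3, Finset.mem_sdiff]; exact ⟨hx₁U2, hx⟩⟩
  obtain ⟨v₃, hv₃U3, hv₃max⟩ := Finset.exists_max_image U3 (fun v => (cls E v).card) hU3ne
  set C3 := cls E v₃ with hC3
  have hv₃U3' := hv₃U3
  rw [hU3, Finset.mem_sdiff] at hv₃U3'
  obtain ⟨hv₃U2, hv₃C2⟩ := hv₃U3'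
  have hv₃U2' := hv₃U2
  rw [hU2, Finset.mem_sdiff] at hv₃U2'
  have hC3sub : C3 ⊆ U3 := by
    intro z hz
    rw [hU3, Finset.mem_sdiff, hU2, Finset.mem_sdiff]
    exact ⟨⟨mem_univ _, fun h => hv₃U2'.2 (cls_glue hE hC hk hn hcard h hz)⟩,
      fun h => hv₃C2 (cls_glue hE hC hk hn hcard h hz)⟩
  set a := C1.card with ha
  set b := C2.card with hb
  set c := C3.card with hc
  set R := U3.card with hR
  have hU3mem : ∀ i : Fin n, i ∉ C1 → i ∉ C2 → i ∈ U3 := by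
    intro i h1 h2
    rw [hU3, Finset.mem_sdiff, hU2, Finset.mem_sdiff]
    exact ⟨⟨mem_univ _, h1⟩, h2⟩
  have hU3notC1 : ∀ i ∈ U3, i ∉ C1 := by
    intro i hi
    rw [hU3, Finset.mem_sdiff, hU2, Finset.mem_sdiff] at hi
    exact hi.1.2
  have hU3notC2 : ∀ i ∈ U3, i ∉ C2 := by
    intro i hi
    rw [hU3, Finset.mem_sdiff] at hi
    exact hi.2
  have hC2notC1 : ∀ i ∈ C2, i ∉ C1 := by
    intro i hi
    have := hC2sub hi
    rw [hU2, Finset.mem_sdiff] at this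
    exact this.2
  have hcards : a + b + R = n := by
    have h1 : U2.card = n - a := by
      rw [hU2, Finset.card_sdiff_of_subset (Finset.subset_univ _), Finset.card_univ, Fintype.card_fin]
    have h2 : U3.card = U2.card - b := by
      rw [hU3, Finset.card_sdiff_of_subset hC2sub]
    have h3 : a ≤ n := by
      calc a ≤ univ.card := Finset.card_le_card (Finset.subset_univ _)
        _ = n := by rw [Finset.card_univ, Fintype.card_fin]
    have h4 : b ≤ U2.card := Finset.card_le_card hC2sub
    omega
  have hba : b ≤ a := hv₁max v₂ (mem_univ _)
  have hcb : c ≤ b := hv₂max v₃ hv₃U2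
  have hcR : c ≤ R := Finset.card_le_card hC3sub
  have hc1 : 1 ≤ c := Finset.card_pos.mpr ⟨v₃, cls_self E v₃⟩
  have hclsu1 : ∀ u ∈ C1, cls E u = C1 := fun u hu => cls_eq_of_mem hE hC hk hn hcard hu
  have hclsu2 : ∀ u ∈ C2, cls E u = C2 := fun u hu => cls_eq_of_mem hE hC hk hn hcard hu
  have hclsu3 : ∀ u ∈ C3, cls E u = C3 := fun u hu => cls_eq_of_mem hE hC hk hn hcard hu
  -- neighbourhood bound
  have hnb : ∀ u ∈ C1, ∀ w, w ∉ C1 → ∃ z₀, z₀ ∉ C1 ∧ z₀ ∉ cls E w ∧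
      cdeg E u w ≤ (cls E z₀).card ∧ (∀ S : Finset (Fin n), cls E z₀ ⊆ S →
        S.card = cdeg E u w → ∀ z ∈ S, ∃ e ∈ E, u ∈ e ∧ w ∈ e ∧ z ∈ e) := by
    intro u hu w hw
    have huw : u ≠ w := fun h => hw (h ▸ hu)
    have hpos : cdeg E u w ≠ 0 := by
      intro h0
      exact hw (by rw [← hclsu1 u hu]; exact mem_cls.mpr (Or.inl h0))
    obtain ⟨z₀, hz₀u, hz₀w, ⟨e₀, he₀E, hue₀, hwe₀, hz₀e₀⟩, hle, hfull⟩ :=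
      cdeg_bound hE hC huw hpos
    refine ⟨z₀, ?_, ?_, hle, hfull⟩
    · intro hz₀C1
      have hmem : z₀ ∈ cls E u := by rw [hclsu1 u hu]; exact hz₀C1
      exact (not_mem_cls he₀E hue₀ hz₀e₀ (fun h => hz₀u h.symm)) hmem
    · exact not_mem_cls he₀E hwe₀ hz₀e₀ (fun h => hz₀w h.symm)
  have hb1 : ∀ u ∈ C1, ∀ w ∈ C2, cdeg E u w ≤ c := by
    intro u hu w hw
    obtain ⟨z₀, hz₀1, hz₀2, hle, -⟩ := hnb u hu w (hC2notC1 w hw)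
    have hz₀C2 : z₀ ∉ C2 := by rw [← hclsu2 w hw]; exact hz₀2
    have hz₀U3 : z₀ ∈ U3 := hU3mem z₀ hz₀1 hz₀C2
    exact le_trans hle (hv₃max z₀ hz₀U3)
  have hb2 : ∀ u ∈ C1, ∀ w ∈ U3, cdeg E u w ≤ b := by
    intro u hu w hw
    obtain ⟨z₀, hz₀1, -, hle, -⟩ := hnb u hu w (hU3notC1 w hw)
    have hz₀U2 : z₀ ∈ U2 := by rw [hU2, Finset.mem_sdiff]; exact ⟨mem_univ _, hz₀1⟩
    exact le_trans hle (hv₂max z₀ hz₀U2)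
  -- the splitting of the codegree sum
  have hdisj12 : Disjoint C1 C2 := by
    rw [Finset.disjoint_left]
    intro i h1 h2
    exact (hC2notC1 i h2) h1
  have hdisj1U3 : Disjoint C1 U3 := by
    rw [Finset.disjoint_left]
    intro i h1 h2
    exact (hU3notC1 i h2) h1
  have hdisj2U3 : Disjoint C2 U3 := by
    rw [Finset.disjoint_left]
    intro i h1 h2
    exact (hU3notC2 i h2) h1
  have huniv : C1 ∪ (C2 ∪ U3) = univ := by
    ext i
    simp only [Finset.mem_union, Finset.mem_univ, iff_true]
    by_cases h1 : i ∈ C1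
    · exact Or.inl h1
    by_cases h2 : i ∈ C2
    · exact Or.inr (Or.inl h2)
    · exact Or.inr (Or.inr (hU3mem i h1 h2))
  have hsplit : ∀ u ∈ C1, ∑ w ∈ C2, cdeg E u w + ∑ w ∈ U3, cdeg E u w = 2*k^2 := by
    intro u hu
    have h0 := sum_cdeg E hE u
    rw [hdg u] at h0
    have hzero : ∀ w ∈ C1.erase u, cdeg E u w = 0 := by
      intro w hw
      obtain ⟨hwu, hwC1⟩ := Finset.mem_erase.mp hw
      have hmem : w ∈ cls E u := by rw [hclsu1 u hu]; exact hwC1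
      rcases mem_cls.mp hmem with h | h
      · exact h
      · exact absurd h hwu
    have hsumuniv : ∑ w ∈ (univ : Finset (Fin n)), cdeg E u w
        = cdeg E u u + ∑ w ∈ univ.erase u, cdeg E u w :=
      (Finset.add_sum_erase _ _ (mem_univ u)).symm
    have hsumsplit : ∑ w ∈ (univ : Finset (Fin n)), cdeg E u w
        = ∑ w ∈ C1, cdeg E u w + (∑ w ∈ C2, cdeg E u w + ∑ w ∈ U3, cdeg E u w) := by
      rw [← huniv, Finset.sum_union (Finset.disjoint_union_right.mpr ⟨hdisj12, hdisj1U3⟩),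
        Finset.sum_union hdisj2U3]
    have hC1sum : ∑ w ∈ C1, cdeg E u w = cdeg E u u := by
      rw [← Finset.add_sum_erase C1 _ hu, Finset.sum_eq_zero hzero, add_zero]
    omega
  have hineq : 2*k^2 ≤ b*(c+R) := by
    have hs := hsplit v₁ (cls_self E v₁)
    have h1 : ∑ w ∈ C2, cdeg E v₁ w ≤ b * c := by
      calc ∑ w ∈ C2, cdeg E v₁ w ≤ C2.card • c :=
            Finset.sum_le_card_nsmul _ _ _ (fun w hw => hb1 v₁ (cls_self E v₁) w hw)
        _ = b * c := by rw [smul_eq_mul]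
    have h2 : ∑ w ∈ U3, cdeg E v₁ w ≤ R * b := by
      calc ∑ w ∈ U3, cdeg E v₁ w ≤ U3.card • b :=
            Finset.sum_le_card_nsmul _ _ _ (fun w hw => hb2 v₁ (cls_self E v₁) w hw)
        _ = R * b := by rw [smul_eq_mul]
    calc 2*k^2 = ∑ w ∈ C2, cdeg E v₁ w + ∑ w ∈ U3, cdeg E v₁ w := hs.symm
      _ ≤ b*c + R*b := add_le_add h1 h2
      _ = b*(c+R) := by ring
  obtain ⟨hak, hbk, hck, hRk⟩ := nat_solve hk (by rw [← hn]; exact hcards) hba hcb hcR hc1 hineq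
  -- U3 is a single class
  have hU3C3 : U3 = C3 :=
    (Finset.eq_of_subset_of_card_le hC3sub (by rw [← hR, ← hc, hck, hRk])).symm
  -- all codegrees across C1 are exactly k
  have hallC2 : ∀ u ∈ C1, ∀ w ∈ C2, cdeg E u w = k := by
    intro u hu
    have hs := hsplit u hu
    have hA : ∑ w ∈ C2, cdeg E u w ≤ b * k := by
      calc ∑ w ∈ C2, cdeg E u w ≤ C2.card • k :=
            Finset.sum_le_card_nsmul _ _ _ (fun w hw => hck ▸ hb1 u hu w hw)
        _ = b * k := by rw [smul_eq_mul]
    have hB : ∑ w ∈ U3, cdeg E u w ≤ R * k := by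
      calc ∑ w ∈ U3, cdeg E u w ≤ U3.card • k :=
            Finset.sum_le_card_nsmul _ _ _ (fun w hw => hbk ▸ hb2 u hu w hw)
        _ = R * k := by rw [smul_eq_mul]
    have hAe : ∑ w ∈ C2, cdeg E u w = C2.card * k := by
      have e1 : b * k = k * k := by rw [hbk]
      have e2 : R * k = k * k := by rw [hRk]
      have e3 : 2 * k^2 = k*k + k*k := by ring
      rw [← hb]
      omega
    exact all_eq_of_sum (fun w hw => hck ▸ hb1 u hu w hw) hAe
  -- completeness: every transversal triple is an edge
  have hcomplete : ∀ u ∈ C1, ∀ w ∈ C2, ∀ z ∈ U3, ∃ e ∈ E, u ∈ e ∧ w ∈ e ∧ z ∈ e := by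
    intro u hu w hw z hz
    obtain ⟨z₀, hz₀1, hz₀2, hle, hfull⟩ := hnb u hu w (hC2notC1 w hw)
    have hz₀C2 : z₀ ∉ C2 := by rw [← hclsu2 w hw]; exact hz₀2
    have hz₀U3 : z₀ ∈ U3 := hU3mem z₀ hz₀1 hz₀C2
    have hclsz₀ : cls E z₀ = C3 := hclsu3 z₀ (hU3C3 ▸ hz₀U3)
    refine hfull U3 ?_ ?_ z hz
    · rw [hclsz₀, ← hU3C3]
    · rw [← hR, hRk, hallC2 u hu w hw]
  have hmem3 : ∀ u ∈ C1, ∀ w ∈ C2, ∀ z ∈ U3, ({u, w, z} : Finset (Fin n)) ∈ E := by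
    intro u hu w hw z hz
    obtain ⟨e, heE, hue, hwe, hze⟩ := hcomplete u hu w hw z hz
    have huw : u ≠ w := fun h => (hC2notC1 w hw) (h ▸ hu)
    have huz : u ≠ z := fun h => (hU3notC1 z hz) (h ▸ hu)
    have hwz : w ≠ z := fun h => (hU3notC2 z hz) (h ▸ hw)
    have hsub : ({u, w, z} : Finset (Fin n)) ⊆ e := by
      intro i hi
      simp only [Finset.mem_insert, Finset.mem_singleton] at hi
      rcases hi with rfl | rfl | rfl
      exacts [hue, hwe, hze]
    have hc3 : ({u, w, z} : Finset (Fin n)).card = 3 := by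
      have h1 : u ∉ ({w, z} : Finset (Fin n)) := by
        simp only [Finset.mem_insert, Finset.mem_singleton]
        push_neg
        exact ⟨huw, huz⟩
      have h2 : w ∉ ({z} : Finset (Fin n)) := by
        simp only [Finset.mem_singleton]
        exact hwz
      rw [Finset.card_insert_of_notMem h1, Finset.card_insert_of_notMem h2,
        Finset.card_singleton]
    have heq : ({u, w, z} : Finset (Fin n)) = e :=
      Finset.eq_of_subset_of_card_le hsub (by rw [hE e heE, hc3])
    rw [heq]
    exact heE
  -- the partition map
  set P : Fin n → Fin 3 := fun i => if i ∈ C1 then 0 else if i ∈ C2 then 1 else 2 with hP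
  have hP0 : ∀ i, P i = 0 ↔ i ∈ C1 := by
    intro i
    rw [hP]
    by_cases h1 : i ∈ C1
    · simp [h1]
    · by_cases h2 : i ∈ C2 <;> simp [h1, h2]
  have hP1 : ∀ i, P i = 1 ↔ i ∈ C2 := by
    intro i
    rw [hP]
    by_cases h1 : i ∈ C1
    · simp only [if_pos h1]
      constructor
      · intro h; exact absurd h (by decide)
      · intro h; exact absurd h1 (hC2notC1 i h)
    · by_cases h2 : i ∈ C2 <;> simp [h1, h2]
  have hP2 : ∀ i, P i = 2 ↔ i ∈ U3 := by
    intro i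
    rw [hP]
    by_cases h1 : i ∈ C1
    · simp only [if_pos h1]
      constructor
      · intro h; exact absurd h (by decide)
      · intro h; exact absurd h1 (hU3notC1 i h)
    · by_cases h2 : i ∈ C2
      · simp only [if_neg h1, if_pos h2]
        constructor
        · intro h; exact absurd h (by decide)
        · intro h; exact absurd h2 (hU3notC2 i h)
      · simp only [if_neg h1, if_neg h2]
        exact iff_of_true trivial (hU3mem i h1 h2)
  refine ⟨P, ?_, ?_⟩
  · intro j
    rcases fin3_cases j with rfl | rfl | rfl
    · have : univ.filter (fun i => P i = 0) = C1 := by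
        ext i
        simp only [Finset.mem_filter, mem_univ, true_and]
        exact hP0 i
      rw [this, ← ha, hak]
    · have : univ.filter (fun i => P i = 1) = C2 := by
        ext i
        simp only [Finset.mem_filter, mem_univ, true_and]
        exact hP1 i
      rw [this, ← hb, hbk]
    · have : univ.filter (fun i => P i = 2) = U3 := by
        ext i
        simp only [Finset.mem_filter, mem_univ, true_and]
        exact hP2 i
      rw [this, ← hR, hRk]
  · intro e
    constructor
    · intro heE j
      have hcard3 : e.card = 3 := hE e heE
      have hinj : ∀ x ∈ e, ∀ y ∈ e, P x = P y → x = y := by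
        intro x hx y hy hPxy
        by_contra hne
        have hadj : y ∉ cls E x := not_mem_cls heE hx hy hne
        apply hadj
        rcases fin3_cases (P x) with h | h | h
        · have hx1 : x ∈ C1 := (hP0 x).mp h
          have hy1 : y ∈ C1 := (hP0 y).mp (by rw [← hPxy]; exact h)
          rw [hclsu1 x hx1]; exact hy1
        · have hx1 : x ∈ C2 := (hP1 x).mp h
          have hy1 : y ∈ C2 := (hP1 y).mp (by rw [← hPxy]; exact h)
          rw [hclsu2 x hx1]; exact hy1
        · have hx1 : x ∈ U3 := (hP2 x).mp h
          have hy1 : y ∈ U3 := (hP2 y).mp (by rw [← hPxy]; exact h)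
          rw [hclsu3 x (hU3C3 ▸ hx1), ← hU3C3]; exact hy1
      have hsum3 : ∑ j : Fin 3, (e.filter (fun i => P i = j)).card = 3 := by
        rw [← Finset.card_eq_sum_card_fiberwise (fun x _ => mem_univ (P x)), hcard3]
      have hle1 : ∀ j : Fin 3, (e.filter (fun i => P i = j)).card ≤ 1 := by
        intro j
        rw [Finset.card_le_one]
        intro x hx y hy
        obtain ⟨hxe, hPx⟩ := Finset.mem_filter.mp hx
        obtain ⟨hye, hPy⟩ := Finset.mem_filter.mp hy
        exact hinj x hxe y hye (by rw [hPx, hPy])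
      rw [Fin.sum_univ_three] at hsum3
      have g0 := hle1 0
      have g1 := hle1 1
      have g2 := hle1 2
      rcases fin3_cases j with rfl | rfl | rfl <;> omega
    · intro hfib
      obtain ⟨x₀, hx₀⟩ := Finset.card_eq_one.mp (hfib 0)
      obtain ⟨xa, hxa⟩ := Finset.card_eq_one.mp (hfib 1)
      obtain ⟨xb, hxb⟩ := Finset.card_eq_one.mp (hfib 2)
      have hm0 : x₀ ∈ e ∧ P x₀ = 0 := Finset.mem_filter.mp (by
        rw [hx₀]; exact Finset.mem_singleton_self _)
      have hm1 : xa ∈ e ∧ P xa = 1 := Finset.mem_filter.mp (by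
        rw [hxa]; exact Finset.mem_singleton_self _)
      have hm2 : xb ∈ e ∧ P xb = 2 := Finset.mem_filter.mp (by
        rw [hxb]; exact Finset.mem_singleton_self _)
      have hesub : e ⊆ {x₀, xa, xb} := by
        intro i hi
        simp only [Finset.mem_insert, Finset.mem_singleton]
        rcases fin3_cases (P i) with h | h | h
        · have : i ∈ e.filter (fun i => P i = 0) := Finset.mem_filter.mpr ⟨hi, h⟩
          rw [hx₀] at this
          exact Or.inl (Finset.mem_singleton.mp this)
        · have : i ∈ e.filter (fun i => P i = 1) := Finset.mem_filter.mpr ⟨hi, h⟩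
          rw [hxa] at this
          exact Or.inr (Or.inl (Finset.mem_singleton.mp this))
        · have : i ∈ e.filter (fun i => P i = 2) := Finset.mem_filter.mpr ⟨hi, h⟩
          rw [hxb] at this
          exact Or.inr (Or.inr (Finset.mem_singleton.mp this))
      have hesup : ({x₀, xa, xb} : Finset (Fin n)) ⊆ e := by
        intro i hi
        simp only [Finset.mem_insert, Finset.mem_singleton] at hi
        rcases hi with rfl | rfl | rfl
        exacts [hm0.1, hm1.1, hm2.1]
      have heq : e = {x₀, xa, xb} := Finset.Subset.antisymm hesub hesup
      rw [heq]
      exact hmem3 x₀ ((hP0 x₀).mp hm0.2) xa ((hP1 xa).mp hm1.2) xb ((hP2 xb).mp hm2.2)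

end Equality4

section Parts

lemma part3_iff {k : ℕ} (hn : n = 3*k) (i : Fin n) :
    (part3 n i = 0 ↔ (i:ℕ) < k) ∧ (part3 n i = 1 ↔ (k ≤ (i:ℕ) ∧ (i:ℕ) < 2*k)) ∧
      (part3 n i = 2 ↔ 2*k ≤ (i:ℕ)) := by
  have h1 : n / 3 = k := by omega
  have h2 : (n+1)/3 = k := by omega
  unfold part3
  rw [h1, h2, show k + k = 2*k from by ring]
  by_cases ha : (i:ℕ) < k
  · rw [if_pos ha]
    exact ⟨⟨fun _ => ha, fun _ => rfl⟩, ⟨fun h => absurd h (by decide), fun h => by omega⟩,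
      ⟨fun h => absurd h (by decide), fun h => by omega⟩⟩
  · rw [if_neg ha]
    by_cases hb : (i:ℕ) < 2*k
    · rw [if_pos hb]
      exact ⟨⟨fun h => absurd h (by decide), fun h => by omega⟩,
        ⟨fun _ => ⟨by omega, hb⟩, fun _ => rfl⟩,
        ⟨fun h => absurd h (by decide), fun h => by omega⟩⟩
    · rw [if_neg hb]
      exact ⟨⟨fun h => absurd h (by decide), fun h => by omega⟩,
        ⟨fun h => absurd h (by decide), fun h => by omega⟩,
        ⟨fun _ => by omega, fun _ => rfl⟩⟩

lemma card_val_filter (p : ℕ → Prop) [DecidablePred p] :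
    (univ.filter (fun i : Fin n => p (i:ℕ))).card = ((Finset.range n).filter p).card := by
  apply Finset.card_nbij (fun i : Fin n => (i:ℕ))
  · intro i hi
    rw [Finset.mem_coe] at hi ⊢
    rw [Finset.mem_filter] at hi ⊢
    rw [Finset.mem_range]
    exact ⟨i.isLt, hi.2⟩
  · intro i _ j _ hij
    exact Fin.ext hij
  · intro m hm
    rw [Finset.mem_coe, Finset.mem_filter, Finset.mem_range] at hm
    exact ⟨⟨m, hm.1⟩, by
      rw [Finset.mem_coe, Finset.mem_filter]; exact ⟨mem_univ _, hm.2⟩, rfl⟩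

lemma part3_fiber_card {k : ℕ} (hn : n = 3*k) (j : Fin 3) :
    (univ.filter (fun i : Fin n => part3 n i = j)).card = k := by
  rcases fin3_cases j with rfl | rfl | rfl
  · have hfe : univ.filter (fun i : Fin n => part3 n i = 0)
        = univ.filter (fun i : Fin n => (i:ℕ) < k) :=
      Finset.filter_congr (fun i _ => (part3_iff hn i).1)
    rw [hfe, card_val_filter (fun m => m < k)]
    have hr : (Finset.range n).filter (fun m => m < k) = Finset.range k := by
      ext m
      simp only [Finset.mem_filter, Finset.mem_range]
      omega
    rw [hr, Finset.card_range]
  · have hfe : univ.filter (fun i : Fin n => part3 n i = 1)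
        = univ.filter (fun i : Fin n => k ≤ (i:ℕ) ∧ (i:ℕ) < 2*k) :=
      Finset.filter_congr (fun i _ => (part3_iff hn i).2.1)
    rw [hfe, card_val_filter (fun m => k ≤ m ∧ m < 2*k)]
    have hr : (Finset.range n).filter (fun m => k ≤ m ∧ m < 2*k) = Finset.Ico k (2*k) := by
      ext m
      simp only [Finset.mem_filter, Finset.mem_range, Finset.mem_Ico]
      omega
    rw [hr, Nat.card_Ico]
    omega
  · have hfe : univ.filter (fun i : Fin n => part3 n i = 2)
        = univ.filter (fun i : Fin n => 2*k ≤ (i:ℕ)) :=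
      Finset.filter_congr (fun i _ => (part3_iff hn i).2.2)
    rw [hfe, card_val_filter (fun m => 2*k ≤ m)]
    have hr : (Finset.range n).filter (fun m => 2*k ≤ m) = Finset.Ico (2*k) n := by
      ext m
      simp only [Finset.mem_filter, Finset.mem_range, Finset.mem_Ico]
      omega
    rw [hr, Nat.card_Ico]
    omega

lemma mem_T3 {e : Finset (Fin n)} :
    e ∈ T3 n ↔ ∀ j : Fin 3, (e.filter fun i => part3 n i = j).card = 1 := by
  unfold T3
  rw [Finset.mem_filter]
  simp only [mem_univ, true_and]

lemma build_iso {P : Fin n → Fin 3}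
    (hfib : ∀ j : Fin 3, (univ.filter (fun i => P i = j)).card
      = (univ.filter (fun i => part3 n i = j)).card) :
    ∃ σ : Fin n ≃ Fin n, ∀ i, part3 n (σ i) = P i := by
  classical
  have hcardeq : ∀ j : Fin 3,
      Fintype.card {i // P i = j} = Fintype.card {i // part3 n i = j} := by
    intro j
    rw [Fintype.card_subtype, Fintype.card_subtype]
    exact hfib j
  let eqv : ∀ j : Fin 3, {i // P i = j} ≃ {i // part3 n i = j} :=
    fun j => Fintype.equivOfCardEq (hcardeq j)
  refine ⟨(Equiv.sigmaFiberEquiv P).symm.trans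
    ((Equiv.sigmaCongrRight eqv).trans (Equiv.sigmaFiberEquiv (part3 n))), ?_⟩
  intro i
  show part3 n ((Equiv.sigmaFiberEquiv (part3 n)) ((Equiv.sigmaCongrRight eqv)
    ((Equiv.sigmaFiberEquiv P).symm i))) = P i
  have h1 : (Equiv.sigmaFiberEquiv P).symm i = ⟨P i, ⟨i, rfl⟩⟩ := rfl
  rw [h1]
  have h2 : (Equiv.sigmaCongrRight eqv) (⟨P i, ⟨i, rfl⟩⟩ :
      Σ j : Fin 3, {i // P i = j}) = ⟨P i, eqv (P i) ⟨i, rfl⟩⟩ := rfl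
  rw [h2]
  exact (eqv (P i) ⟨i, rfl⟩).2

lemma card_T3 {k : ℕ} (hn : n = 3*k) : (T3 n).card = k^3 := by
  classical
  have h0 := part3_fiber_card hn 0
  have h1 := part3_fiber_card hn 1
  have h2 := part3_fiber_card hn 2
  set s0 := univ.filter (fun i : Fin n => part3 n i = 0) with hs0
  set s1 := univ.filter (fun i : Fin n => part3 n i = 1) with hs1
  set s2 := univ.filter (fun i : Fin n => part3 n i = 2) with hs2
  have hmem : ∀ i : Fin n, ∀ j : Fin 3, part3 n i = j → i ∈ (if j = 0 then s0 else if j = 1 then s1 else s2) := by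
    intro i j hj
    rcases fin3_cases j with rfl | rfl | rfl <;>
      simp [hs0, hs1, hs2, hj]
  have key : (s0 ×ˢ s1 ×ˢ s2).card = (T3 n).card := by
    apply Finset.card_nbij (fun p => ({p.1, p.2.1, p.2.2} : Finset (Fin n)))
    · rintro ⟨u, w, z⟩ hp
      rw [Finset.mem_coe] at hp
      rw [Finset.mem_product, Finset.mem_product] at hp
      obtain ⟨hu, hw, hz⟩ := hp
      show ({u, w, z} : Finset (Fin n)) ∈ T3 n
      have hup : part3 n u = 0 := (Finset.mem_filter.mp hu).2
      have hwp : part3 n w = 1 := (Finset.mem_filter.mp hw).2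
      have hzp : part3 n z = 2 := (Finset.mem_filter.mp hz).2
      have huw : u ≠ w := fun h => by rw [h, hwp] at hup; exact absurd hup (by decide)
      have huz : u ≠ z := fun h => by rw [h, hzp] at hup; exact absurd hup (by decide)
      have hwz : w ≠ z := fun h => by rw [h, hzp] at hwp; exact absurd hwp (by decide)
      rw [mem_T3]
      intro j
      rcases fin3_cases j with rfl | rfl | rfl
      · have : ({u,w,z} : Finset (Fin n)).filter (fun i => part3 n i = 0) = {u} := by
          ext i
          simp only [Finset.mem_filter, Finset.mem_insert, Finset.mem_singleton]
          constructor
          · rintro ⟨rfl | rfl | rfl, hp⟩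
            · rfl
            · rw [hwp] at hp; exact absurd hp (by decide)
            · rw [hzp] at hp; exact absurd hp (by decide)
          · rintro rfl; exact ⟨Or.inl rfl, hup⟩
        rw [this, Finset.card_singleton]
      · have : ({u,w,z} : Finset (Fin n)).filter (fun i => part3 n i = 1) = {w} := by
          ext i
          simp only [Finset.mem_filter, Finset.mem_insert, Finset.mem_singleton]
          constructor
          · rintro ⟨rfl | rfl | rfl, hp⟩
            · rw [hup] at hp; exact absurd hp (by decide)
            · rfl
            · rw [hzp] at hp; exact absurd hp (by decide)
          · rintro rfl; exact ⟨Or.inr (Or.inl rfl), hwp⟩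
        rw [this, Finset.card_singleton]
      · have : ({u,w,z} : Finset (Fin n)).filter (fun i => part3 n i = 2) = {z} := by
          ext i
          simp only [Finset.mem_filter, Finset.mem_insert, Finset.mem_singleton]
          constructor
          · rintro ⟨rfl | rfl | rfl, hp⟩
            · rw [hup] at hp; exact absurd hp (by decide)
            · rw [hwp] at hp; exact absurd hp (by decide)
            · rfl
          · rintro rfl; exact ⟨Or.inr (Or.inr rfl), hzp⟩
        rw [this, Finset.card_singleton]
    · rintro ⟨u, w, z⟩ hp ⟨u', w', z'⟩ hp' heq
      rw [Finset.mem_coe, Finset.mem_product, Finset.mem_product] at hp hp'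
      obtain ⟨hu, hw, hz⟩ := hp
      obtain ⟨hu', hw', hz'⟩ := hp'
      have hup : part3 n u = 0 := (Finset.mem_filter.mp hu).2
      have hwp : part3 n w = 1 := (Finset.mem_filter.mp hw).2
      have hzp : part3 n z = 2 := (Finset.mem_filter.mp hz).2
      have hup' : part3 n u' = 0 := (Finset.mem_filter.mp hu').2
      have hwp' : part3 n w' = 1 := (Finset.mem_filter.mp hw').2
      have hzp' : part3 n z' = 2 := (Finset.mem_filter.mp hz').2
      have heq' : ({u, w, z} : Finset (Fin n)) = {u', w', z'} := heq
      have hmemu : u' ∈ ({u, w, z} : Finset (Fin n)) := by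
        rw [heq']; simp
      have hmemw : w' ∈ ({u, w, z} : Finset (Fin n)) := by
        rw [heq']; simp
      have hmemz : z' ∈ ({u, w, z} : Finset (Fin n)) := by
        rw [heq']; simp
      simp only [Finset.mem_insert, Finset.mem_singleton] at hmemu hmemw hmemz
      have hueq : u' = u := by
        rcases hmemu with h | h | h
        · exact h
        · rw [h, hwp] at hup'; exact absurd hup' (by decide)
        · rw [h, hzp] at hup'; exact absurd hup' (by decide)
      have hweq : w' = w := by
        rcases hmemw with h | h | h
        · rw [h, hup] at hwp'; exact absurd hwp' (by decide)
        · exact h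
        · rw [h, hzp] at hwp'; exact absurd hwp' (by decide)
      have hzeq : z' = z := by
        rcases hmemz with h | h | h
        · rw [h, hup] at hzp'; exact absurd hzp' (by decide)
        · rw [h, hwp] at hzp'; exact absurd hzp' (by decide)
        · exact h
      rw [Prod.ext_iff, Prod.ext_iff]
      exact ⟨hueq.symm, hweq.symm, hzeq.symm⟩
    · intro e he
      rw [Finset.mem_coe, mem_T3] at he
      obtain ⟨x₀, hx₀⟩ := Finset.card_eq_one.mp (he 0)
      obtain ⟨xa, hxa⟩ := Finset.card_eq_one.mp (he 1)
      obtain ⟨xb, hxb⟩ := Finset.card_eq_one.mp (he 2)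
      have hm0 : x₀ ∈ e ∧ part3 n x₀ = 0 := Finset.mem_filter.mp (by
        rw [hx₀]; exact Finset.mem_singleton_self _)
      have hm1 : xa ∈ e ∧ part3 n xa = 1 := Finset.mem_filter.mp (by
        rw [hxa]; exact Finset.mem_singleton_self _)
      have hm2 : xb ∈ e ∧ part3 n xb = 2 := Finset.mem_filter.mp (by
        rw [hxb]; exact Finset.mem_singleton_self _)
      refine ⟨(x₀, xa, xb), ?_, ?_⟩
      · rw [Finset.mem_coe, Finset.mem_product, Finset.mem_product]
        exact ⟨Finset.mem_filter.mpr ⟨mem_univ _, hm0.2⟩,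
          Finset.mem_filter.mpr ⟨mem_univ _, hm1.2⟩,
          Finset.mem_filter.mpr ⟨mem_univ _, hm2.2⟩⟩
      · show ({x₀, xa, xb} : Finset (Fin n)) = e
        apply Finset.Subset.antisymm
        · intro i hi
          simp only [Finset.mem_insert, Finset.mem_singleton] at hi
          rcases hi with rfl | rfl | rfl
          exacts [hm0.1, hm1.1, hm2.1]
        · intro i hi
          simp only [Finset.mem_insert, Finset.mem_singleton]
          rcases fin3_cases (part3 n i) with h | h | h
          · have : i ∈ e.filter (fun i => part3 n i = 0) := Finset.mem_filter.mpr ⟨hi, h⟩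
            rw [hx₀] at this
            exact Or.inl (Finset.mem_singleton.mp this)
          · have : i ∈ e.filter (fun i => part3 n i = 1) := Finset.mem_filter.mpr ⟨hi, h⟩
            rw [hxa] at this
            exact Or.inr (Or.inl (Finset.mem_singleton.mp this))
          · have : i ∈ e.filter (fun i => part3 n i = 2) := Finset.mem_filter.mpr ⟨hi, h⟩
            rw [hxb] at this
            exact Or.inr (Or.inr (Finset.mem_singleton.mp this))
  rw [← key, Finset.card_product, Finset.card_product, h0, h1, h2]
  ring

lemma card_of_iso {E : Finset (Finset (Fin n))} (h : IsoTo E (T3 n)) :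
    E.card = (T3 n).card := by
  obtain ⟨σ, hσ⟩ := h
  apply Finset.card_nbij (fun e => e.map σ.toEmbedding)
  · intro e he
    exact (hσ e).mp he
  · intro e₁ _ e₂ _ heq
    exact Finset.map_injective σ.toEmbedding heq
  · intro f hf
    rw [Finset.mem_coe] at hf
    refine ⟨f.map σ.symm.toEmbedding, ?_, ?_⟩
    · rw [Finset.mem_coe]
      apply (hσ _).mpr
      rw [Finset.map_map]
      have : σ.symm.toEmbedding.trans σ.toEmbedding = Function.Embedding.refl _ := by
        ext i
        simp
      rw [this, Finset.map_refl]
      exact hf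
    · show (f.map σ.symm.toEmbedding).map σ.toEmbedding = f
      rw [Finset.map_map]
      have : σ.symm.toEmbedding.trans σ.toEmbedding = Function.Embedding.refl _ := by
        ext i
        simp
      rw [this, Finset.map_refl]

end Parts

end BB
/-- For `n ≡ 0 (mod 3)`, a cancellative 3-graph on `n` vertices has at most
`t_3(n) = n³/27` edges, with equality iff it is isomorphic to `T_3(n)`. -/
theorem cancellative_card_le_of_three_dvd {n : ℕ} (hn : n % 3 = 0)
    (E : Finset (Finset (Fin n))) (hE : IsThreeGraph E) (hC : Cancellative E) :
    t3 n = n ^ 3 / 27 ∧ E.card ≤ t3 n ∧ (E.card = t3 n ↔ IsoTo E (T3 n)) := by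
  classical
  obtain ⟨k, rfl⟩ : ∃ k, n = 3 * k := ⟨n / 3, by omega⟩
  have ht3 : t3 (3*k) = k^3 := by
    unfold t3
    have h1 : 3*k/3 = k := by omega
    have h2 : (3*k+1)/3 = k := by omega
    have h3 : (3*k+2)/3 = k := by omega
    rw [h1, h2, h3]
    ring
  have hpow : (3*k)^3/27 = k^3 := by
    have h : (3*k)^3 = 27 * k^3 := by ring
    rw [h]
    omega
  have hEempty : k = 0 → E = ∅ := by
    intro hk0
    rw [Finset.eq_empty_iff_forall_notMem]
    intro e he
    have h3 := hE e he
    have hle : e.card ≤ (univ : Finset (Fin (3*k))).card :=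
      Finset.card_le_card (Finset.subset_univ e)
    rw [Finset.card_univ, Fintype.card_fin] at hle
    omega
  have hbound : E.card ≤ k^3 := by
    rcases Nat.eq_zero_or_pos k with hk0 | hk
    · rw [hEempty hk0]
      simp
    · have hnpos : 0 < 3*k := by omega
      have hmem := BB.uniform_mem (n := 3*k) hnpos
      have hle := BB.pv_le E hE hC _ hmem
      rw [BB.pv_uniform E hE] at hle
      have hNR : (0:ℝ) < ((3*k : ℕ) : ℝ) := by exact_mod_cast hnpos
      have hN3 : (0:ℝ) < ((3*k : ℕ) : ℝ)^3 := by positivity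
      have h27 : ((3*k:ℕ):ℝ)^3 = 27 * (k:ℝ)^3 := by push_cast; ring
      have hcast : (E.card : ℝ) ≤ (k:ℝ)^3 := by
        have h1 : (E.card : ℝ) * (1/((3*k:ℕ):ℝ))^3 * ((3*k:ℕ):ℝ)^3
            ≤ (1/27) * ((3*k:ℕ):ℝ)^3 :=
          mul_le_mul_of_nonneg_right hle (le_of_lt hN3)
        have h2 : (E.card : ℝ) * (1/((3*k:ℕ):ℝ))^3 * ((3*k:ℕ):ℝ)^3 = (E.card : ℝ) := by
          field_simp
        rw [h2, h27] at h1
        linarith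
      exact_mod_cast hcast
  refine ⟨by rw [ht3, hpow], by rw [ht3]; exact hbound, ?_⟩
  rw [ht3]
  constructor
  · intro hcard
    rcases Nat.eq_zero_or_pos k with hk0 | hk
    · refine ⟨Equiv.refl _, fun e => ?_⟩
      constructor
      · intro he
        rw [hEempty hk0] at he
        exact absurd he (Finset.notMem_empty e)
      · intro hT
        rw [BB.mem_T3] at hT
        have h0 := hT 0
        have hsub : ((e.map (Equiv.refl (Fin (3*k))).toEmbedding).filter
            (fun i => part3 (3*k) i = 0)).card ≤ (univ : Finset (Fin (3*k))).card :=
          Finset.card_le_card (Finset.subset_univ _)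
        rw [Finset.card_univ, Fintype.card_fin] at hsub
        omega
    · obtain ⟨P, hPfib, hPiff⟩ := BB.structure_thm hE hC hk rfl hcard
      obtain ⟨σ, hσ⟩ := BB.build_iso (P := P)
        (fun j => by rw [hPfib j, BB.part3_fiber_card rfl j])
      refine ⟨σ, fun e => ?_⟩
      rw [BB.mem_T3, hPiff e]
      refine forall_congr' (fun j => ?_)
      have hj : ((e.map σ.toEmbedding).filter (fun i => part3 (3*k) i = j)).card
          = (e.filter (fun i => P i = j)).card := by
        rw [Finset.filter_map, Finset.card_map]
        congr 1
        apply Finset.filter_congr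
        intro i _
        show part3 (3*k) (σ.toEmbedding i) = j ↔ P i = j
        rw [show σ.toEmbedding i = σ i from rfl, hσ i]
      rw [hj]
  · intro hiso
    rw [BB.card_of_iso hiso, BB.card_T3 rfl]
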